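/- arXiv:0707.2333 — 7 statements merged into one kernel-verified Lean document; each statement's English description precedes it below -/
import Mathlib

section
/- For every noncrossing pair partition p of {1,...,2k}, the number of blocks of p ∨ m plus the number of blocks of p ∨ n equals k+1, where m = {{1,2},{3,4},...,{2k-1,2k}} and n = {{2,3},{4,5},...,{2k,1}} are the two canonical interval pair partitions and ∨ denotes the join (coarsest common refinement bound) in the partition lattice. -/
/-- A partition (as a setoid) of `Fin N` is a pair partition if every block has two elements. -/
def IsPairPartition {N : ℕ} (p : Setoid (Fin N)) : Prop :=
  ∀ c ∈ p.classes, c.ncard = 2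

/-- A partition of `Fin N` is noncrossing if there are no `p1 < q1 < p2 < q2` with
`p1 ~ p2`, `q1 ~ q2` but `p1 ≁ q1`. -/
def IsNoncrossing {N : ℕ} (p : Setoid (Fin N)) : Prop :=
  ¬ ∃ p1 q1 p2 q2 : Fin N, p1 < q1 ∧ q1 < p2 ∧ p2 < q2 ∧
      p.r p1 p2 ∧ p.r q1 q2 ∧ ¬ p.r p1 q1

/-- The pair partition `{{1,2},{3,4},…,{2k-1,2k}}` (0-indexed: `{0,1},{2,3},…`). -/
def mSetoid (k : ℕ) : Setoid (Fin (2 * k)) :=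
  Setoid.ker (fun i => i.val / 2)

/-- The cyclic pair partition `{{2,3},{4,5},…,{2k,1}}` (0-indexed: `{1,2},{3,4},…,{2k-1,0}`). -/
def nSetoid (k : ℕ) : Setoid (Fin (2 * k)) :=
  Setoid.ker (fun i => ((i.val + 1) / 2) % k)

namespace NCPair

/-! ### Generic setoid lemmas -/

lemma classes_ncard {α : Type*} (s : Setoid α) :
    s.classes.ncard = Nat.card (Quotient s) := by
  rw [← Nat.card_coe_set_eq]
  exact (Nat.card_congr (Setoid.quotientEquivClasses s)).symm

lemma comap_mono {α β : Type*} (f : α → β) {s t : Setoid β} (h : s ≤ t) :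
    Setoid.comap f s ≤ Setoid.comap f t := fun _ _ hxy => h hxy

lemma comap_equiv_sup {α β : Type*} (e : α ≃ β) (s t : Setoid β) :
    Setoid.comap e (s ⊔ t) = Setoid.comap e s ⊔ Setoid.comap e t := by
  apply le_antisymm
  · have h1 : s ⊔ t ≤ Setoid.comap e.symm (Setoid.comap ⇑e s ⊔ Setoid.comap ⇑e t) := by
      apply sup_le
      · intro x y hxy
        exact (le_sup_left : Setoid.comap ⇑e s ≤ _)
          (show s.r (e (e.symm x)) (e (e.symm y)) by simpa using hxy)
      · intro x y hxy
        exact (le_sup_right : Setoid.comap ⇑e t ≤ _)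
          (show t.r (e (e.symm x)) (e (e.symm y)) by simpa using hxy)
    intro x y hxy
    have h2 : (Setoid.comap ⇑e s ⊔ Setoid.comap ⇑e t).r (e.symm (e x)) (e.symm (e y)) := h1 hxy
    simpa using h2
  · exact sup_le (comap_mono _ le_sup_left) (comap_mono _ le_sup_right)

lemma card_quotient_comap {α β : Type*} (e : α ≃ β) (s : Setoid β) :
    Nat.card (Quotient (Setoid.comap e s)) = Nat.card (Quotient s) :=
  Nat.card_congr (Quotient.congr e fun _ _ => Iff.rfl)

/-! ### Pair partition helpers -/

lemma partner_unique {N : ℕ} {p : Setoid (Fin N)} (hp : IsPairPartition p) {a b c : Fin N}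
    (hab : p.r a b) (hac : p.r a c) (hb : b ≠ a) (hc : c ≠ a) : b = c := by
  have h2 := hp _ ⟨a, rfl⟩
  obtain ⟨x, y, hxy, hset⟩ := Set.ncard_eq_two.mp h2
  have ha : a ∈ {x | p.r x a} := p.refl' a
  have hbm : b ∈ {x | p.r x a} := p.symm' hab
  have hcm : c ∈ {x | p.r x a} := p.symm' hac
  rw [hset] at ha hbm hcm
  simp only [Set.mem_insert_iff, Set.mem_singleton_iff] at ha hbm hcm
  rcases ha with rfl | rfl <;> rcases hbm with rfl | rfl <;> rcases hcm with rfl | rfl <;>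
    simp_all

lemma partner_exists {N : ℕ} {p : Setoid (Fin N)} (hp : IsPairPartition p) (a : Fin N) :
    ∃ b, b ≠ a ∧ p.r a b := by
  have h2 := hp _ ⟨a, rfl⟩
  obtain ⟨x, y, hxy, hset⟩ := Set.ncard_eq_two.mp h2
  have ha : a ∈ {x | p.r x a} := p.refl' a
  have hx : x ∈ {z | p.r z a} := by rw [hset]; simp
  have hy : y ∈ {z | p.r z a} := by rw [hset]; simp
  rw [hset] at ha
  simp only [Set.mem_insert_iff, Set.mem_singleton_iff] at ha
  rcases ha with rfl | rfl
  · exact ⟨y, fun h => hxy h.symm, p.symm' hy⟩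
  · exact ⟨x, fun h => hxy h, p.symm' hx⟩

lemma nc_elim {N : ℕ} {p : Setoid (Fin N)} (h : IsNoncrossing p) {p1 q1 p2 q2 : Fin N}
    (h1 : p1 < q1) (h2 : q1 < p2) (h3 : p2 < q2) (h4 : p.r p1 p2) (h5 : p.r q1 q2)
    (h6 : ¬ p.r p1 q1) : False := h ⟨p1, q1, p2, q2, h1, h2, h3, h4, h5, h6⟩

/-! ### Existence of an adjacent block -/

lemma exists_adjacent {k : ℕ} (hk : 1 ≤ k) (p : Setoid (Fin (2*k)))
    (hpair : IsPairPartition p) (hnc : IsNoncrossing p) :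
    ∃ a b : Fin (2*k), a.val + 1 = b.val ∧ p.r a b := by
  classical
  have hne : ∃ d, 0 < d ∧ ∃ a b : Fin (2*k), a.val + d = b.val ∧ p.r a b := by
    obtain ⟨b, hb, hr⟩ := partner_exists hpair ⟨0, by omega⟩
    have hbv : b.val ≠ 0 := fun h => hb (Fin.ext h)
    exact ⟨b.val, by omega, ⟨0, by omega⟩, b, by simp, hr⟩
  obtain ⟨hd0, a, b, hab, hr⟩ := Nat.find_spec hne
  by_cases hd1 : Nat.find hne = 1
  · exact ⟨a, b, by omega, hr⟩
  · exfalso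
    have hd2 : 2 ≤ Nat.find hne := by omega
    have hbval : b.val < 2*k := b.isLt
    have hcv : a.val + 1 < 2*k := by omega
    obtain ⟨e, hec, hce⟩ := partner_exists hpair ⟨a.val + 1, hcv⟩
    have hcval : (⟨a.val + 1, hcv⟩ : Fin (2*k)).val = a.val + 1 := rfl
    have hca : (⟨a.val + 1, hcv⟩ : Fin (2*k)) ≠ a := by
      intro h; have := congrArg Fin.val h; omega
    have hba : b ≠ a := by intro h; have := congrArg Fin.val h; omega
    have hcb : (⟨a.val + 1, hcv⟩ : Fin (2*k)) ≠ b := by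
      intro h; have := congrArg Fin.val h; omega
    have hab' : a ≠ b := by intro h; have := congrArg Fin.val h; omega
    have hea : e ≠ a := by
      intro h; subst h
      have h2 := partner_unique hpair (p.symm' hce) hr hca hba
      have := congrArg Fin.val h2; omega
    have heb : e ≠ b := by
      intro h; subst h
      have h2 := partner_unique hpair (p.symm' hce) (p.symm' hr) hcb hab'
      have := congrArg Fin.val h2; omega
    have heav : e.val ≠ a.val := fun h => hea (Fin.ext h)
    have hebv : e.val ≠ b.val := fun h => heb (Fin.ext h)
    have hecv : e.val ≠ a.val + 1 := fun h => hec (Fin.ext h)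
    rcases lt_or_gt_of_ne heav with hlt | hgt
    · -- e < a < c < b : crossing (e,a,c,b)
      refine nc_elim hnc (p1 := e) (q1 := a) (p2 := ⟨a.val + 1, hcv⟩) (q2 := b)
        (Fin.lt_def.mpr (by omega)) (Fin.lt_def.mpr (by omega)) (Fin.lt_def.mpr (by omega))
        (p.symm' hce) hr ?_
      intro h
      exact heb (partner_unique hpair (p.symm' h) hr hea hba)
    · rcases lt_or_ge e.val b.val with hlt2 | hge2
      · -- a < c < e < b : smaller gap witness (c, e)
        have hmem : 0 < e.val - (a.val + 1) ∧ ∃ a' b' : Fin (2*k),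
            a'.val + (e.val - (a.val + 1)) = b'.val ∧ p.r a' b' :=
          ⟨by omega, ⟨a.val + 1, hcv⟩, e, by omega, hce⟩
        exact Nat.find_min hne (by omega) hmem
      · -- a < c < b < e : crossing (a,c,b,e)
        refine nc_elim hnc (p1 := a) (q1 := ⟨a.val + 1, hcv⟩) (p2 := b) (q2 := e)
          (Fin.lt_def.mpr (by omega)) (Fin.lt_def.mpr (by omega)) (Fin.lt_def.mpr (by omega))
          hr hce ?_
        intro h
        exact hcb (partner_unique hpair h hr hca hba)


/-! ### Arithmetic helper -/

lemma mod_cases {u v k : ℕ} (hu : u ≤ k) (hv : v ≤ k) (h : u % k = v % k) :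
    u = v ∨ (u = 0 ∧ v = k) ∨ (u = k ∧ v = 0) := by
  rcases eq_or_lt_of_le hu with rfl | hu' <;> rcases eq_or_lt_of_le hv with h2 | hv'
  · left; omega
  · rw [Nat.mod_self, Nat.mod_eq_of_lt hv'] at h; right; right; omega
  · subst h2; rw [Nat.mod_self, Nat.mod_eq_of_lt hu'] at h; right; left; omega
  · rw [Nat.mod_eq_of_lt hu', Nat.mod_eq_of_lt hv'] at h; left; exact h

/-! ### Rotation -/

def rotE (k : ℕ) (hk : 1 ≤ k) : Fin (2*k) ≃ Fin (2*k) where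
  toFun x := ⟨(x.val + 1) % (2*k), Nat.mod_lt _ (by omega)⟩
  invFun x := ⟨(x.val + (2*k-1)) % (2*k), Nat.mod_lt _ (by omega)⟩
  left_inv x := by
    apply Fin.ext
    show ((x.val + 1) % (2*k) + (2*k-1)) % (2*k) = x.val
    rw [Nat.mod_add_mod]
    have h1 : x.val + 1 + (2*k-1) = x.val + 2*k := by omega
    rw [h1, Nat.add_mod_right, Nat.mod_eq_of_lt x.isLt]
  right_inv x := by
    apply Fin.ext
    show ((x.val + (2*k-1)) % (2*k) + 1) % (2*k) = x.val
    rw [Nat.mod_add_mod]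
    have h1 : x.val + (2*k-1) + 1 = x.val + 2*k := by omega
    rw [h1, Nat.add_mod_right, Nat.mod_eq_of_lt x.isLt]

lemma rot_val {k : ℕ} (hk : 1 ≤ k) (x : Fin (2*k)) :
    ((rotE k hk) x).val = if x.val = 2*k - 1 then 0 else x.val + 1 := by
  show (x.val + 1) % (2*k) = _
  split
  · next h =>
    have h1 : x.val + 1 = 2*k := by omega
    rw [h1, Nat.mod_self]
  · next h => exact Nat.mod_eq_of_lt (by omega)

lemma comap_rot_m {k : ℕ} (hk : 1 ≤ k) :
    Setoid.comap (rotE k hk) (mSetoid k) = nSetoid k := by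
  have key : ∀ z : Fin (2*k), ((rotE k hk) z).val / 2 = ((z.val + 1) / 2) % k := by
    intro z
    rw [rot_val hk z]
    split
    · next h =>
      have h1 : z.val + 1 = 2*k := by omega
      have h2 : 2*k/2 = k := by omega
      rw [h1, h2, Nat.mod_self]
    · next h =>
      rw [Nat.mod_eq_of_lt (by omega : (z.val + 1) / 2 < k)]
  apply Setoid.ext
  intro x y
  show ((rotE k hk) x).val / 2 = ((rotE k hk) y).val / 2 ↔
    ((x.val + 1) / 2) % k = ((y.val + 1) / 2) % k
  rw [key x, key y]

lemma comap_rot_n {k : ℕ} (hk : 1 ≤ k) :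
    Setoid.comap (rotE k hk) (nSetoid k) = mSetoid k := by
  have key : ∀ z : Fin (2*k), ((((rotE k hk) z).val + 1) / 2) % k = (z.val / 2 + 1) % k := by
    intro z
    rw [rot_val hk z]
    split
    · next h =>
      have h1 : z.val / 2 + 1 = k := by omega
      rw [h1, Nat.mod_self]
      simp
    · next h =>
      have h1 : (z.val + 1 + 1) / 2 = z.val / 2 + 1 := by omega
      rw [h1]
  apply Setoid.ext
  intro x y
  show ((((rotE k hk) x).val + 1) / 2) % k = ((((rotE k hk) y).val + 1) / 2) % k ↔
    x.val / 2 = y.val / 2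
  rw [key x, key y]
  constructor
  · intro h
    rcases mod_cases (by omega : x.val / 2 + 1 ≤ k) (by omega : y.val / 2 + 1 ≤ k) h with
      h1 | ⟨h1, _⟩ | ⟨_, h1⟩ <;> omega
  · intro h; rw [h]

lemma comap_equiv_pair {N M : ℕ} (e : Fin N ≃ Fin M) {p : Setoid (Fin M)}
    (hp : IsPairPartition p) : IsPairPartition (Setoid.comap e p) := by
  rintro c ⟨y, rfl⟩
  have hpre : {x : Fin N | (Setoid.comap ⇑e p).r x y} = ⇑e ⁻¹' {x | p.r x (e y)} := rfl
  have h1 : ⇑e '' (⇑e ⁻¹' {x | p.r x (e y)}) = {x | p.r x (e y)} :=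
    Set.image_preimage_eq_of_subset (by rw [e.range_eq_univ]; exact Set.subset_univ _)
  calc ({x : Fin N | (Setoid.comap ⇑e p).r x y}).ncard
      = (⇑e '' (⇑e ⁻¹' {x | p.r x (e y)})).ncard := by
        rw [hpre, Set.ncard_image_of_injective _ e.injective]
    _ = 2 := by rw [h1]; exact hp _ ⟨e y, rfl⟩

lemma rot_nc {k : ℕ} (hk : 1 ≤ k) {p : Setoid (Fin (2*k))} (hp : IsPairPartition p)
    (hnc : IsNoncrossing p) : IsNoncrossing (Setoid.comap (rotE k hk) p) := by
  rintro ⟨a, b, c, d, hab, hbc, hcd, h1, h2, h3⟩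
  rw [Fin.lt_def] at hab hbc hcd
  -- h1 : p.r (rot a) (rot c), h2 : p.r (rot b) (rot d), h3 : ¬ p.r (rot a) (rot b)
  have hd2k : d.val < 2*k := d.isLt
  by_cases hd : d.val = 2*k - 1
  · -- wrap: rot d = 0
    have hva : ((rotE k hk) a).val = a.val + 1 := by rw [rot_val]; split <;> omega
    have hvb : ((rotE k hk) b).val = b.val + 1 := by rw [rot_val]; split <;> omega
    have hvc : ((rotE k hk) c).val = c.val + 1 := by rw [rot_val]; split <;> omega
    have hvd : ((rotE k hk) d).val = 0 := by rw [rot_val]; split <;> omega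
    refine nc_elim hnc (p1 := (rotE k hk) d) (q1 := (rotE k hk) a) (p2 := (rotE k hk) b)
      (q2 := (rotE k hk) c)
      (Fin.lt_def.mpr (by omega)) (Fin.lt_def.mpr (by omega)) (Fin.lt_def.mpr (by omega))
      (p.symm' h2) h1 ?_
    intro h
    have hne1 : (rotE k hk) d ≠ (rotE k hk) a := fun hh => by
      have := congrArg Fin.val hh; omega
    have hne2 : (rotE k hk) c ≠ (rotE k hk) a := fun hh => by
      have := congrArg Fin.val hh; omega
    have h4 := partner_unique hp (p.symm' h) h1 hne1 hne2
    have := congrArg Fin.val h4; omega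
  · -- no wrap
    have hva : ((rotE k hk) a).val = a.val + 1 := by rw [rot_val]; split <;> omega
    have hvb : ((rotE k hk) b).val = b.val + 1 := by rw [rot_val]; split <;> omega
    have hvc : ((rotE k hk) c).val = c.val + 1 := by rw [rot_val]; split <;> omega
    have hvd : ((rotE k hk) d).val = d.val + 1 := by rw [rot_val]; split <;> omega
    exact nc_elim hnc
      (Fin.lt_def.mpr (by omega)) (Fin.lt_def.mpr (by omega)) (Fin.lt_def.mpr (by omega))
      h1 h2 h3

lemma rot_S {k : ℕ} (hk : 1 ≤ k) (p : Setoid (Fin (2*k))) :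
    Nat.card (Quotient (Setoid.comap (rotE k hk) p ⊔ mSetoid k)) +
      Nat.card (Quotient (Setoid.comap (rotE k hk) p ⊔ nSetoid k)) =
    Nat.card (Quotient (p ⊔ mSetoid k)) + Nat.card (Quotient (p ⊔ nSetoid k)) := by
  have e1 : Setoid.comap (rotE k hk) p ⊔ mSetoid k = Setoid.comap (rotE k hk) (p ⊔ nSetoid k) := by
    rw [comap_equiv_sup, comap_rot_n]
  have e2 : Setoid.comap (rotE k hk) p ⊔ nSetoid k = Setoid.comap (rotE k hk) (p ⊔ mSetoid k) := by
    rw [comap_equiv_sup, comap_rot_m]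
  rw [e1, e2, card_quotient_comap, card_quotient_comap]
  omega

lemma reduce_bottom {k : ℕ} (hk : 1 ≤ k) :
    ∀ t (p : Setoid (Fin (2*k))), IsPairPartition p → IsNoncrossing p →
    ∀ ht : t + 1 < 2*k, p.r ⟨t, by omega⟩ ⟨t+1, ht⟩ →
    ∃ q : Setoid (Fin (2*k)), IsPairPartition q ∧ IsNoncrossing q ∧
      q.r ⟨0, by omega⟩ ⟨1, by omega⟩ ∧
      Nat.card (Quotient (q ⊔ mSetoid k)) + Nat.card (Quotient (q ⊔ nSetoid k)) =
      Nat.card (Quotient (p ⊔ mSetoid k)) + Nat.card (Quotient (p ⊔ nSetoid k)) := by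
  intro t
  induction t with
  | zero =>
    intro p hpair hnc ht hb
    exact ⟨p, hpair, hnc, hb, rfl⟩
  | succ n ih =>
    intro p hpair hnc ht hb
    have hn : n + 1 < 2*k := by omega
    have hblock : (Setoid.comap (rotE k hk) p).r ⟨n, by omega⟩ ⟨n+1, hn⟩ := by
      show p.r ((rotE k hk) ⟨n, by omega⟩) ((rotE k hk) ⟨n+1, hn⟩)
      have e1 : (rotE k hk) ⟨n, by omega⟩ = ⟨n+1, by omega⟩ := by
        apply Fin.ext; rw [rot_val]; simp only [Fin.val_mk]; split <;> omega
      have e2 : (rotE k hk) ⟨n+1, hn⟩ = ⟨n+2, by omega⟩ := by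
        apply Fin.ext; rw [rot_val]; simp only [Fin.val_mk]; split <;> omega
      rw [e1, e2]; exact hb
    obtain ⟨q, h1, h2, h3, h4⟩ := ih (Setoid.comap (rotE k hk) p)
      (comap_equiv_pair _ hpair) (rot_nc hk hpair hnc) hn hblock
    exact ⟨q, h1, h2, h3, by rw [h4, rot_S]⟩


/-! ### Deletion of the bottom block -/

lemma card_option {α : Type*} [Finite α] : Nat.card (Option α) = Nat.card α + 1 := by
  simp [Nat.card_eq_fintype_card]

def emb (k : ℕ) : Fin (2*k) → Fin (2*(k+1)) := fun a => ⟨a.val + 2, by omega⟩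

lemma emb_val (k : ℕ) (a : Fin (2*k)) : (emb k a).val = a.val + 2 := rfl

lemma bottom_closed (k : ℕ) (p : Setoid (Fin (2*(k+1)))) (hp : IsPairPartition p)
    (h01 : p.r ⟨0, by omega⟩ ⟨1, by omega⟩) {x y : Fin (2*(k+1))} (hxy : p.r x y)
    (hx : x.val < 2) : y.val < 2 := by
  have hx0 : p.r ⟨0, by omega⟩ y := by
    have hcase : x.val = 0 ∨ x.val = 1 := by omega
    rcases hcase with h | h
    · have hx' : x = ⟨0, by omega⟩ := Fin.ext h
      rwa [hx'] at hxy
    · have hx' : x = ⟨1, by omega⟩ := Fin.ext h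
      rw [hx'] at hxy
      exact p.trans' h01 hxy
  by_cases hy : y = (⟨0, by omega⟩ : Fin (2*(k+1)))
  · have h3 : y.val = 0 := congrArg Fin.val hy; omega
  · have h2 := partner_unique hp hx0 h01 hy
      (by intro hh; have h3 : (1:ℕ) = 0 := congrArg Fin.val hh; omega)
    have h3 : y.val = 1 := congrArg Fin.val h2; omega

lemma emb_inj (k : ℕ) : Function.Injective (emb k) := by
  intro a b h
  have h2 : a.val + 2 = b.val + 2 := congrArg Fin.val h
  exact Fin.ext (by omega)

lemma comap_emb_pair (k : ℕ) (p : Setoid (Fin (2*(k+1)))) (hp : IsPairPartition p)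
    (h01 : p.r ⟨0, by omega⟩ ⟨1, by omega⟩) :
    IsPairPartition (Setoid.comap (emb k) p) := by
  rintro c ⟨y, rfl⟩
  have hpre : {x : Fin (2*k) | (Setoid.comap (emb k) p).r x y}
      = (emb k) ⁻¹' {x | p.r x (emb k y)} := rfl
  have hsub : {x | p.r x (emb k y)} ⊆ Set.range (emb k) := by
    intro u hu
    have hu2 : 2 ≤ u.val := by
      by_contra h
      have h5 := bottom_closed k p hp h01 (x := u) (y := emb k y) hu (by omega)
      have h6 : (emb k y).val = y.val + 2 := rfl
      omega
    exact ⟨⟨u.val - 2, by omega⟩, Fin.ext (show u.val - 2 + 2 = u.val by omega)⟩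
  have h1 : (emb k) '' ((emb k) ⁻¹' {x | p.r x (emb k y)}) = {x | p.r x (emb k y)} :=
    Set.image_preimage_eq_of_subset hsub
  calc ({x : Fin (2*k) | (Setoid.comap (emb k) p).r x y}).ncard
      = ((emb k) '' ((emb k) ⁻¹' {x | p.r x (emb k y)})).ncard := by
        rw [hpre, Set.ncard_image_of_injective _ (emb_inj k)]
    _ = 2 := by rw [h1]; exact hp _ ⟨emb k y, rfl⟩

lemma comap_mono_nc {N M : ℕ} (f : Fin N → Fin M) (hf : ∀ a b, a < b → f a < f b)
    {p : Setoid (Fin M)} (hnc : IsNoncrossing p) : IsNoncrossing (Setoid.comap f p) := by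
  rintro ⟨a, b, c, d, h1, h2, h3, h4, h5, h6⟩
  exact hnc ⟨f a, f b, f c, f d, hf _ _ h1, hf _ _ h2, hf _ _ h3, h4, h5, h6⟩

lemma comap_emb_nc (k : ℕ) {p : Setoid (Fin (2*(k+1)))} (hnc : IsNoncrossing p) :
    IsNoncrossing (Setoid.comap (emb k) p) :=
  comap_mono_nc _ (fun a b h => Fin.lt_def.mpr (by
    have := Fin.lt_def.mp h; simp only [emb_val]; omega)) hnc

/-- retraction used for the `n`-join count -/
def rdel (k : ℕ) (hk : 1 ≤ k) : Fin (2*(k+1)) → Fin (2*k) := fun x =>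
  if x.val = 0 then ⟨2*k - 1, by omega⟩
  else if x.val = 1 then ⟨0, by omega⟩
  else ⟨x.val - 2, by omega⟩

lemma rdel_zero (k : ℕ) (hk : 1 ≤ k) {x : Fin (2*(k+1))} (h : x.val = 0) :
    rdel k hk x = ⟨2*k - 1, by omega⟩ := by rw [rdel, if_pos h]

lemma rdel_one (k : ℕ) (hk : 1 ≤ k) {x : Fin (2*(k+1))} (h : x.val = 1) :
    rdel k hk x = ⟨0, by omega⟩ := by rw [rdel, if_neg (by omega), if_pos h]

lemma rdel_big (k : ℕ) (hk : 1 ≤ k) {x : Fin (2*(k+1))} (h : 2 ≤ x.val) :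
    rdel k hk x = ⟨x.val - 2, by omega⟩ := by
  rw [rdel, if_neg (by omega), if_neg (by omega)]

/-! ### counting the m-join -/

lemma card_m (k : ℕ) (hk : 1 ≤ k) (p : Setoid (Fin (2*(k+1)))) (hp : IsPairPartition p)
    (h01 : p.r ⟨0, by omega⟩ ⟨1, by omega⟩) :
    Nat.card (Quotient (p ⊔ mSetoid (k+1))) =
      Nat.card (Quotient (Setoid.comap (emb k) p ⊔ mSetoid k)) + 1 := by
  classical
  set Q' := Quotient (Setoid.comap (emb k) p ⊔ mSetoid k) with hQ'
  set g : Fin (2*(k+1)) → Option Q' := fun x =>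
    if h : 2 ≤ x.val then some (Quotient.mk _ (⟨x.val - 2, by omega⟩ : Fin (2*k))) else none
    with hg
  have hgpos : ∀ (x : Fin (2*(k+1))) (h : 2 ≤ x.val),
      g x = some (Quotient.mk _ (⟨x.val - 2, by omega⟩ : Fin (2*k))) := by
    intro x h; simp only [hg]; rw [dif_pos h]
  have hgneg : ∀ (x : Fin (2*(k+1))), ¬ 2 ≤ x.val → g x = none := by
    intro x h; simp only [hg]; rw [dif_neg h]
  have hembx : ∀ (x : Fin (2*(k+1))) (h : 2 ≤ x.val), emb k ⟨x.val - 2, by omega⟩ = x := by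
    intro x h; exact Fin.ext (by show x.val - 2 + 2 = x.val; omega)
  have hgp : ∀ x y, p.r x y → g x = g y := by
    intro x y hxy
    by_cases hx : 2 ≤ x.val
    · have hy : 2 ≤ y.val := by
        by_contra hy'
        have := bottom_closed k p hp h01 (p.symm' hxy) (by omega)
        omega
      rw [hgpos x hx, hgpos y hy]
      refine congrArg some (Quotient.sound ?_)
      refine (le_sup_left : Setoid.comap (emb k) p ≤ _) ?_
      show p.r (emb k ⟨x.val - 2, by omega⟩) (emb k ⟨y.val - 2, by omega⟩)
      rw [hembx x hx, hembx y hy]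
      exact hxy
    · have hy : ¬ 2 ≤ y.val := by
        intro hy'
        have := bottom_closed k p hp h01 hxy (by omega)
        omega
      rw [hgneg x hx, hgneg y hy]
  have hgm : ∀ x y : Fin (2*(k+1)), (mSetoid (k+1)).r x y → g x = g y := by
    intro x y hxy
    have hxy' : x.val / 2 = y.val / 2 := hxy
    by_cases hx : 2 ≤ x.val
    · have hy : 2 ≤ y.val := by omega
      rw [hgpos x hx, hgpos y hy]
      refine congrArg some (Quotient.sound ?_)
      refine (le_sup_right : mSetoid k ≤ _) ?_
      show (x.val - 2) / 2 = (y.val - 2) / 2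
      omega
    · have hy : ¬ 2 ≤ y.val := by omega
      rw [hgneg x hx, hgneg y hy]
  have hle : (p ⊔ mSetoid (k+1)) ≤ Setoid.ker g :=
    sup_le (Setoid.le_def.mpr fun {x y} h => hgp x y h)
      (Setoid.le_def.mpr fun {x y} h => hgm x y h)
  have hle2 : (Setoid.comap (emb k) p ⊔ mSetoid k)
      ≤ Setoid.comap (emb k) (p ⊔ mSetoid (k+1)) := by
    refine sup_le (comap_mono _ le_sup_left) (Setoid.le_def.mpr ?_)
    intro a b hab
    show (p ⊔ mSetoid (k+1)).r (emb k a) (emb k b)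
    refine (le_sup_right : mSetoid (k+1) ≤ _) ?_
    show (a.val + 2) / 2 = (b.val + 2) / 2
    have hab' : a.val / 2 = b.val / 2 := hab
    omega
  have E : Quotient (p ⊔ mSetoid (k+1)) ≃ Option Q' :=
    { toFun := Quotient.lift g (fun a b h => hle h)
      invFun := fun o => o.elim (Quotient.mk _ (⟨0, by omega⟩ : Fin (2*(k+1))))
        (Quotient.lift (fun a => Quotient.mk (p ⊔ mSetoid (k+1)) (emb k a))
          (fun a b h => Quotient.sound (hle2 h)))
      left_inv := by
        intro q
        induction q using Quotient.inductionOn with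
        | h x =>
          by_cases hx : 2 ≤ x.val
          · show (g x).elim _ _ = _
            rw [hgpos x hx]
            show Quotient.mk _ (emb k ⟨x.val - 2, by omega⟩) = Quotient.mk _ x
            rw [hembx x hx]
          · show (g x).elim _ _ = _
            rw [hgneg x hx]
            show Quotient.mk _ (⟨0, by omega⟩ : Fin (2*(k+1))) = Quotient.mk _ x
            have hcase : x.val = 0 ∨ x.val = 1 := by omega
            rcases hcase with h | h
            · exact congrArg _ (Fin.ext (show (0:ℕ) = x.val by omega))
            · refine Quotient.sound ((le_sup_left : p ≤ _) ?_)
              have hx' : x = ⟨1, by omega⟩ := Fin.ext h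
              rw [hx']
              exact h01
      right_inv := by
        intro o
        match o with
        | none =>
          show Quotient.lift g _ (Quotient.mk _ (⟨0, by omega⟩ : Fin (2*(k+1)))) = none
          show g ⟨0, by omega⟩ = none
          exact hgneg _ (show ¬ (2:ℕ) ≤ 0 by omega)
        | some q =>
          induction q using Quotient.inductionOn with
          | h a =>
            show g (emb k a) = some (Quotient.mk _ a)
            rw [hgpos (emb k a) (by rw [emb_val]; omega)]
            refine congrArg some (congrArg _ (Fin.ext ?_))
            show (emb k a).val - 2 = a.val
            rw [emb_val]; omega }
  haveI : Finite Q' := Quotient.finite _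
  rw [Nat.card_congr E, card_option]


/-! ### counting the n-join -/

lemma card_n (k : ℕ) (hk : 1 ≤ k) (p : Setoid (Fin (2*(k+1)))) (hp : IsPairPartition p)
    (h01 : p.r ⟨0, by omega⟩ ⟨1, by omega⟩) :
    Nat.card (Quotient (p ⊔ nSetoid (k+1))) =
      Nat.card (Quotient (Setoid.comap (emb k) p ⊔ nSetoid k)) := by
  classical
  set g : Fin (2*(k+1)) → Quotient (Setoid.comap (emb k) p ⊔ nSetoid k) :=
    fun x => Quotient.mk _ (rdel k hk x) with hgdef
  have hembx : ∀ (x : Fin (2*(k+1))) (h : 2 ≤ x.val), emb k ⟨x.val - 2, by omega⟩ = x :=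
    fun x h => Fin.ext (show x.val - 2 + 2 = x.val by omega)
  have key0 : (Setoid.comap (emb k) p ⊔ nSetoid k).r ⟨2*k-1, by omega⟩ ⟨0, by omega⟩ :=
    (le_sup_right : nSetoid k ≤ _) (by
      show ((2*k-1+1)/2) % k = ((0+1)/2) % k
      have h1 : (2*k-1+1)/2 = k := by omega
      have h2 : ((0:ℕ)+1)/2 = 0 := by omega
      rw [h1, h2, Nat.mod_self, Nat.zero_mod])
  have hs1 : (p ⊔ nSetoid (k+1)).r ⟨2, by omega⟩ ⟨1, by omega⟩ :=
    (le_sup_right : nSetoid (k+1) ≤ _) (by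
      show ((2+1)/2) % (k+1) = ((1+1)/2) % (k+1)
      norm_num)
  have hs2 : (p ⊔ nSetoid (k+1)).r ⟨1, by omega⟩ ⟨0, by omega⟩ :=
    (le_sup_left : p ≤ _) (p.symm' h01)
  have hs3 : (p ⊔ nSetoid (k+1)).r ⟨0, by omega⟩ ⟨2*k+1, by omega⟩ :=
    (le_sup_right : nSetoid (k+1) ≤ _) (by
      show ((0+1)/2) % (k+1) = ((2*k+1+1)/2) % (k+1)
      have h1 : (2*k+1+1)/2 = k+1 := by omega
      have h2 : ((0:ℕ)+1)/2 = 0 := by omega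
      rw [h1, h2, Nat.mod_self, Nat.zero_mod])
  have hchain : (p ⊔ nSetoid (k+1)).r ⟨2, by omega⟩ ⟨2*k+1, by omega⟩ :=
    (p ⊔ nSetoid (k+1)).trans' hs1 ((p ⊔ nSetoid (k+1)).trans' hs2 hs3)
  have hgp : ∀ x y, p.r x y → g x = g y := by
    intro x y hxy
    show Quotient.mk _ (rdel k hk x) = Quotient.mk _ (rdel k hk y)
    by_cases hx : 2 ≤ x.val
    · have hy : 2 ≤ y.val := by
        by_contra hy'
        have h5 := bottom_closed k p hp h01 (p.symm' hxy) (by omega)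
        omega
      rw [rdel_big k hk hx, rdel_big k hk hy]
      refine Quotient.sound ((le_sup_left : Setoid.comap (emb k) p ≤ _) ?_)
      show p.r (emb k ⟨x.val - 2, by omega⟩) (emb k ⟨y.val - 2, by omega⟩)
      rw [hembx x hx, hembx y hy]
      exact hxy
    · have hy : y.val < 2 := bottom_closed k p hp h01 hxy (by omega)
      have hcx : x.val = 0 ∨ x.val = 1 := by omega
      have hcy : y.val = 0 ∨ y.val = 1 := by omega
      rcases hcx with h0 | h1' <;> rcases hcy with g0 | g1'
      · rw [rdel_zero k hk h0, rdel_zero k hk g0]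
      · rw [rdel_zero k hk h0, rdel_one k hk g1']
        exact Quotient.sound key0
      · rw [rdel_one k hk h1', rdel_zero k hk g0]
        exact (Quotient.sound key0).symm
      · rw [rdel_one k hk h1', rdel_one k hk g1']
  have hgn : ∀ x y : Fin (2*(k+1)), (nSetoid (k+1)).r x y → g x = g y := by
    intro x y hxy
    have hxy' : ((x.val+1)/2) % (k+1) = ((y.val+1)/2) % (k+1) := hxy
    show Quotient.mk _ (rdel k hk x) = Quotient.mk _ (rdel k hk y)
    rcases mod_cases (by omega : (x.val+1)/2 ≤ k+1) (by omega : (y.val+1)/2 ≤ k+1) hxy' with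
      hE | ⟨hA1, hA2⟩ | ⟨hB1, hB2⟩
    · by_cases hx3 : 3 ≤ x.val
      · have hy3 : 3 ≤ y.val := by omega
        rw [rdel_big k hk (by omega), rdel_big k hk (by omega)]
        refine Quotient.sound ((le_sup_right : nSetoid k ≤ _) ?_)
        show ((x.val - 2 + 1)/2) % k = ((y.val - 2 + 1)/2) % k
        have h1 : (x.val - 2 + 1)/2 = (y.val - 2 + 1)/2 := by omega
        rw [h1]
      · have hcase : x.val = y.val ∨ (x.val = 1 ∧ y.val = 2) ∨ (x.val = 2 ∧ y.val = 1) := by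
          omega
        rcases hcase with h | ⟨h1', h2'⟩ | ⟨h1', h2'⟩
        · rw [show x = y from Fin.ext h]
        · rw [rdel_one k hk h1', rdel_big k hk (by omega)]
          exact congrArg _ (Fin.ext (show (0:ℕ) = y.val - 2 by omega))
        · rw [rdel_big k hk (by omega), rdel_one k hk h2']
          exact congrArg _ (Fin.ext (show x.val - 2 = 0 by omega))
    · have hx0 : x.val = 0 := by omega
      have hyv : y.val = 2*k+1 := by omega
      rw [rdel_zero k hk hx0, rdel_big k hk (by omega)]
      exact congrArg _ (Fin.ext (show 2*k-1 = y.val - 2 by omega))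
    · have hy0 : y.val = 0 := by omega
      have hxv : x.val = 2*k+1 := by omega
      rw [rdel_big k hk (by omega), rdel_zero k hk hy0]
      exact congrArg _ (Fin.ext (show x.val - 2 = 2*k-1 by omega))
  have hle : (p ⊔ nSetoid (k+1)) ≤ Setoid.ker g :=
    sup_le (Setoid.le_def.mpr fun {x y} h => hgp x y h)
      (Setoid.le_def.mpr fun {x y} h => hgn x y h)
  have hle2 : (Setoid.comap (emb k) p ⊔ nSetoid k)
      ≤ Setoid.comap (emb k) (p ⊔ nSetoid (k+1)) := by
    refine sup_le (comap_mono _ le_sup_left) (Setoid.le_def.mpr ?_)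
    intro a b hab
    have hab' : ((a.val+1)/2) % k = ((b.val+1)/2) % k := hab
    show (p ⊔ nSetoid (k+1)).r (emb k a) (emb k b)
    rcases mod_cases (by omega : (a.val+1)/2 ≤ k) (by omega : (b.val+1)/2 ≤ k) hab' with
      hE | ⟨hA1, hA2⟩ | ⟨hB1, hB2⟩
    · refine (le_sup_right : nSetoid (k+1) ≤ _) ?_
      show ((a.val+2+1)/2) % (k+1) = ((b.val+2+1)/2) % (k+1)
      have h1 : (a.val+2+1)/2 = (b.val+2+1)/2 := by omega
      rw [h1]
    · have ha : emb k a = ⟨2, by omega⟩ := Fin.ext (show a.val + 2 = 2 by omega)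
      have hb : emb k b = ⟨2*k+1, by omega⟩ := Fin.ext (show b.val + 2 = 2*k+1 by omega)
      rw [ha, hb]
      exact hchain
    · have ha : emb k a = ⟨2*k+1, by omega⟩ := Fin.ext (show a.val + 2 = 2*k+1 by omega)
      have hb : emb k b = ⟨2, by omega⟩ := Fin.ext (show b.val + 2 = 2 by omega)
      rw [ha, hb]
      exact (p ⊔ nSetoid (k+1)).symm' hchain
  have E : Quotient (p ⊔ nSetoid (k+1)) ≃ Quotient (Setoid.comap (emb k) p ⊔ nSetoid k) :=
    { toFun := Quotient.lift g (fun a b h => hle h)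
      invFun := Quotient.lift (fun a => Quotient.mk (p ⊔ nSetoid (k+1)) (emb k a))
        (fun a b h => Quotient.sound (hle2 h))
      left_inv := by
        intro q
        induction q using Quotient.inductionOn with
        | h x =>
          show Quotient.mk _ (emb k (rdel k hk x)) = Quotient.mk _ x
          by_cases hx : 2 ≤ x.val
          · rw [rdel_big k hk hx, hembx x hx]
          · have hcase : x.val = 0 ∨ x.val = 1 := by omega
            rcases hcase with h | h
            · rw [rdel_zero k hk h]
              have he : emb k ⟨2*k-1, by omega⟩ = (⟨2*k+1, by omega⟩ : Fin (2*(k+1))) :=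
                Fin.ext (show 2*k-1+2 = 2*k+1 by omega)
              have hx' : x = ⟨0, by omega⟩ := Fin.ext h
              rw [he, hx']
              exact Quotient.sound ((p ⊔ nSetoid (k+1)).symm' hs3)
            · rw [rdel_one k hk h]
              have he : emb k ⟨0, by omega⟩ = (⟨2, by omega⟩ : Fin (2*(k+1))) :=
                Fin.ext (show 0+2 = 2 by omega)
              have hx' : x = ⟨1, by omega⟩ := Fin.ext h
              rw [he, hx']
              exact Quotient.sound hs1
      right_inv := by
        intro q
        induction q using Quotient.inductionOn with
        | h a =>
          show Quotient.mk _ (rdel k hk (emb k a)) = Quotient.mk _ a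
          rw [rdel_big k hk (show 2 ≤ (emb k a).val by rw [emb_val]; omega)]
          refine congrArg _ (Fin.ext ?_)
          show (emb k a).val - 2 = a.val
          have h6 : (emb k a).val = a.val + 2 := rfl
          omega }
  exact Nat.card_congr E


/-! ### Main induction -/

lemma main_aux : ∀ k, 1 ≤ k → ∀ p : Setoid (Fin (2*k)), IsPairPartition p → IsNoncrossing p →
    Nat.card (Quotient (p ⊔ mSetoid k)) + Nat.card (Quotient (p ⊔ nSetoid k)) = k + 1 := by
  intro k
  induction k with
  | zero => intro h; exact absurd h (by omega)
  | succ n ih =>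
    intro _ p hpair hnc
    by_cases hn : n = 0
    · subst hn
      have hall : ∀ a b : Fin (2*(0+1)), p.r a b := by
        intro a b
        obtain ⟨c, hc, hr⟩ := partner_exists hpair a
        have hav := a.isLt
        have hbv := b.isLt
        have hcv := c.isLt
        have hac : a.val ≠ c.val := fun h => hc (Fin.ext h.symm)
        have hb2 : b.val = a.val ∨ b.val = c.val := by omega
        rcases hb2 with h | h
        · rw [show b = a from Fin.ext h]
        · rw [show b = c from Fin.ext h]
          exact hr
      have hone : ∀ (t : Setoid (Fin (2*(0+1)))), (∀ a b, t.r a b) → Nat.card (Quotient t) = 1 := by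
        intro t ht
        haveI h1 : Subsingleton (Quotient t) :=
          ⟨by rintro ⟨a⟩ ⟨b⟩; exact Quotient.sound (ht a b)⟩
        haveI h2 : Nonempty (Fin (2*(0+1))) := ⟨⟨0, by omega⟩⟩
        haveI h3 : Nonempty (Quotient t) := Nonempty.map (Quotient.mk t) h2
        exact Nat.card_eq_one_iff_unique.mpr ⟨h1, h3⟩
      rw [hone _ (fun a b => (le_sup_left : p ≤ p ⊔ mSetoid (0+1)) (hall a b)),
          hone _ (fun a b => (le_sup_left : p ≤ p ⊔ nSetoid (0+1)) (hall a b))]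
    · have hn1 : 1 ≤ n := by omega
      have hkk : 1 ≤ n+1 := by omega
      obtain ⟨a, b, hab, hr⟩ := exists_adjacent hkk p hpair hnc
      have hlt : a.val + 1 < 2*(n+1) := by have := b.isLt; omega
      have hb : b = ⟨a.val+1, hlt⟩ := Fin.ext (show b.val = a.val + 1 from hab.symm)
      have hblock : p.r ⟨a.val, by omega⟩ ⟨a.val+1, hlt⟩ := by
        have h1 : (⟨a.val, by omega⟩ : Fin (2*(n+1))) = a := Fin.ext rfl
        rw [h1, ← hb]
        exact hr
      obtain ⟨q, hq1, hq2, hq3, hq4⟩ := reduce_bottom hkk a.val p hpair hnc hlt hblock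
      have hq'pair := comap_emb_pair n q hq1 hq3
      have hq'nc := comap_emb_nc n hq2
      have hm := card_m n hn1 q hq1 hq3
      have hnn := card_n n hn1 q hq1 hq3
      have hih := ih hn1 (Setoid.comap (emb n) q) hq'pair hq'nc
      omega

end NCPair

/-- For every noncrossing pair partition `p` of `{1,…,2k}`,
`|p ∨ m| + |p ∨ n| = k + 1`. -/
theorem block_count_join_m_add_join_n (k : ℕ) (hk : 1 ≤ k) (p : Setoid (Fin (2 * k)))
    (hpair : IsPairPartition p) (hnc : IsNoncrossing p) :
    (p ⊔ mSetoid k).classes.ncard + (p ⊔ nSetoid k).classes.ncard = k + 1 := by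
  rw [NCPair.classes_ncard, NCPair.classes_ncard]
  exact NCPair.main_aux k hk p hpair hnc
end

section
/- For each j with 1 ≤ j ≤ k, the number of noncrossing pair partitions p of {1,...,2k} with |p ∨ m| = j equals the number of noncrossing partitions of {1,...,k} with exactly j blocks, where m = {{1,2},{3,4},...,{2k-1,2k}}. Moreover the map p ↦ p ∨ m is a bijection from noncrossing pair partitions of {1,...,2k} onto noncrossing partitions of {1,...,2k} all of whose blocks are unions of blocks of m (identified with noncrossing partitions of {1,...,k}). -/
namespace NCPP
open Setoid

variable {k N : ℕ}

/-- projection Fin (2k) → Fin k -/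
def dd (i : Fin (2*k)) : Fin k := ⟨i.val / 2, by omega⟩
/-- even embedding -/
def ev (a : Fin k) : Fin (2*k) := ⟨2*a.val, by omega⟩
/-- odd embedding -/
def od (a : Fin k) : Fin (2*k) := ⟨2*a.val+1, by omega⟩

lemma dd_ev (a : Fin k) : dd (ev a) = a := by
  apply Fin.ext; show (2*a.val)/2 = a.val; omega

lemma dd_od (a : Fin k) : dd (od a) = a := by
  apply Fin.ext; show (2*a.val+1)/2 = a.val; omega

lemma ev_lt_ev {a b : Fin k} : ev a < ev b ↔ a < b := by
  rw [Fin.lt_def, Fin.lt_def]; show 2*a.val < 2*b.val ↔ _; omega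
lemma od_lt_od {a b : Fin k} : od a < od b ↔ a < b := by
  rw [Fin.lt_def, Fin.lt_def]; show 2*a.val+1 < 2*b.val+1 ↔ _; omega
lemma od_lt_ev {a b : Fin k} : od a < ev b ↔ a < b := by
  rw [Fin.lt_def, Fin.lt_def]; show 2*a.val+1 < 2*b.val ↔ _; omega
lemma ev_lt_od {a b : Fin k} : ev a < od b ↔ a ≤ b := by
  rw [Fin.lt_def, Fin.le_def]; show 2*a.val < 2*b.val+1 ↔ _; omega
lemma ev_ne_od {a b : Fin k} : ev a ≠ od b := by
  intro h; have := congrArg Fin.val h; revert this; show ¬ (2*a.val = 2*b.val+1); omega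
lemma od_inj {a b : Fin k} (h : od a = od b) : a = b := by
  have := congrArg Fin.val h; apply Fin.ext; revert this; show 2*a.val+1 = 2*b.val+1 → _; omega
lemma ev_inj {a b : Fin k} (h : ev a = ev b) : a = b := by
  have := congrArg Fin.val h; apply Fin.ext; revert this; show 2*a.val = 2*b.val → _; omega

/-- pullback along dd -/
def Phi (r : Setoid (Fin k)) : Setoid (Fin (2*k)) := Setoid.comap dd r
/-- restriction to even positions -/
def Psi (q : Setoid (Fin (2*k))) : Setoid (Fin k) := Setoid.comap ev q

lemma Phi_rel {r : Setoid (Fin k)} {x y : Fin (2*k)} : Phi r x y ↔ r (dd x) (dd y) := Iff.rfl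
lemma Psi_rel {q : Setoid (Fin (2*k))} {a b : Fin k} : Psi q a b ↔ q (ev a) (ev b) := Iff.rfl

lemma m_rel {x y : Fin (2*k)} : mSetoid k x y ↔ x.val / 2 = y.val / 2 := Iff.rfl

lemma m_ev_od (a : Fin k) : mSetoid k (ev a) (od a) := by
  show (2*a.val)/2 = (2*a.val+1)/2; omega

lemma m_self_ev (x : Fin (2*k)) : mSetoid k x (ev (dd x)) := by
  show x.val/2 = (2*(x.val/2))/2; omega

lemma Psi_Phi (r : Setoid (Fin k)) : Psi (Phi r) = r := by
  ext a b
  show r (dd (ev a)) (dd (ev b)) ↔ r a b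
  rw [dd_ev, dd_ev]

lemma m_le_Phi (r : Setoid (Fin k)) : mSetoid k ≤ Phi r := by
  intro x y h
  have : dd x = dd y := by
    apply Fin.ext; exact h
  show r (dd x) (dd y)
  rw [this]

lemma Phi_Psi {q : Setoid (Fin (2*k))} (h : mSetoid k ≤ q) : Phi (Psi q) = q := by
  ext x y
  have hx : q x (ev (dd x)) := h (m_self_ev x)
  have hy : q y (ev (dd y)) := h (m_self_ev y)
  show q (ev (dd x)) (ev (dd y)) ↔ q x y
  constructor
  · intro h'; exact q.trans' hx (q.trans' h' (q.symm' hy))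
  · intro h'; exact q.trans' (q.symm' hx) (q.trans' h' hy)

/-- noncrossing transfers along Phi -/
lemma nc_Phi_iff {r : Setoid (Fin k)} : IsNoncrossing (Phi r) ↔ IsNoncrossing r := by
  constructor
  · intro h ⟨a, c, b, d, h1, h2, h3, hab, hcd, hnac⟩
    exact h ⟨ev a, ev c, ev b, ev d, ev_lt_ev.2 h1, ev_lt_ev.2 h2, ev_lt_ev.2 h3,
      by show r (dd (ev a)) (dd (ev b)); rwa [dd_ev, dd_ev],
      by show r (dd (ev c)) (dd (ev d)); rwa [dd_ev, dd_ev],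
      by show ¬ r (dd (ev a)) (dd (ev c)); rwa [dd_ev, dd_ev]⟩
  · intro h ⟨x1, x2, x3, x4, h1, h2, h3, h13, h24, hn12⟩
    have h13' : r (dd x1) (dd x3) := h13
    have h24' : r (dd x2) (dd x4) := h24
    have hn12' : ¬ r (dd x1) (dd x2) := hn12
    have hv1 := h1; rw [Fin.lt_def] at hv1
    have hv2 := h2; rw [Fin.lt_def] at hv2
    have hv3 := h3; rw [Fin.lt_def] at hv3
    have m1 : dd x1 ≤ dd x2 := by rw [Fin.le_def]; show x1.val/2 ≤ x2.val/2; omega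
    have m2 : dd x2 ≤ dd x3 := by rw [Fin.le_def]; show x2.val/2 ≤ x3.val/2; omega
    have s1 : dd x1 < dd x2 := lt_of_le_of_ne m1 (fun he => hn12' (he ▸ r.refl' _))
    have s2 : dd x2 < dd x3 := lt_of_le_of_ne m2 (fun he => hn12' (by rw [he]; exact h13'))
    have m3 : dd x3 ≤ dd x4 := by rw [Fin.le_def]; show x3.val/2 ≤ x4.val/2; omega
    have s3 : dd x3 < dd x4 := lt_of_le_of_ne m3 (fun he => hn12' (r.trans' h13' (r.symm' (by rw [← he] at h24'; exact h24'))))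
    exact h ⟨dd x1, dd x2, dd x3, dd x4, s1, s2, s3, h13', h24', hn12'⟩

/-- classes of Phi r have same count as classes of r -/
lemma classes_Phi (r : Setoid (Fin k)) : (Phi r).classes = (fun C => dd ⁻¹' C) '' r.classes := by
  ext c
  constructor
  · rintro ⟨y, rfl⟩
    exact ⟨{w | r w (dd y)}, r.mem_classes (dd y), rfl⟩
  · rintro ⟨C, ⟨z, rfl⟩, rfl⟩
    refine ⟨ev z, ?_⟩
    ext x
    show r (dd x) z ↔ r (dd x) (dd (ev z))
    rw [dd_ev]

lemma dd_surj : Function.Surjective (dd : Fin (2*k) → Fin k) :=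
  fun a => ⟨ev a, dd_ev a⟩

lemma ncard_classes_Phi (r : Setoid (Fin k)) : (Phi r).classes.ncard = r.classes.ncard := by
  rw [classes_Phi]
  exact Set.ncard_image_of_injective _ (Set.preimage_injective.2 dd_surj)

end NCPP
namespace NCPP
open Setoid
variable {k : ℕ}

open Classical in
/-- the class of `a` as a finset -/
noncomputable def cls (r : Setoid (Fin k)) (a : Fin k) : Finset (Fin k) :=
  Finset.univ.filter (fun b => r a b)

lemma mem_cls {r : Setoid (Fin k)} {a b : Fin k} : b ∈ cls r a ↔ r a b := by
  simp [cls]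

open Classical in
/-- cyclic successor of `a` within its class -/
noncomputable def nsucc (r : Setoid (Fin k)) (a : Fin k) : Fin k :=
  if h : ((cls r a).filter (fun b => a < b)).Nonempty then ((cls r a).filter (fun b => a < b)).min' h
  else (cls r a).min' ⟨a, mem_cls.2 (r.refl' a)⟩

lemma nsucc_rel (r : Setoid (Fin k)) (a : Fin k) : r a (nsucc r a) := by
  classical
  unfold nsucc
  split
  · next h => have := Finset.min'_mem _ h; rw [Finset.mem_filter, mem_cls] at this; exact this.1
  · next h => have := Finset.min'_mem (cls r a) ⟨a, mem_cls.2 (r.refl' a)⟩; exact mem_cls.1 this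

lemma nsucc_gt {r : Setoid (Fin k)} {a b : Fin k} (hr : r a b) (hab : a < b) :
    a < nsucc r a ∧ nsucc r a ≤ b := by
  classical
  have hne : ((cls r a).filter (fun c => a < c)).Nonempty :=
    ⟨b, by rw [Finset.mem_filter, mem_cls]; exact ⟨hr, hab⟩⟩
  unfold nsucc
  rw [dif_pos hne]
  constructor
  · have := Finset.min'_mem _ hne; rw [Finset.mem_filter] at this; exact this.2
  · exact Finset.min'_le _ b (by rw [Finset.mem_filter, mem_cls]; exact ⟨hr, hab⟩)

lemma nsucc_le_of_gt {r : Setoid (Fin k)} {a w : Fin k} (h : a < nsucc r a)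
    (hw : r a w) (haw : a < w) : nsucc r a ≤ w := by
  classical
  have hne : ((cls r a).filter (fun c => a < c)).Nonempty :=
    ⟨w, by rw [Finset.mem_filter, mem_cls]; exact ⟨hw, haw⟩⟩
  unfold nsucc
  rw [dif_pos hne]
  exact Finset.min'_le _ w (by rw [Finset.mem_filter, mem_cls]; exact ⟨hw, haw⟩)

/-- if the successor wraps around, `a` is the max and `nsucc a` the min of the class -/
lemma nsucc_wrap {r : Setoid (Fin k)} {a : Fin k} (h : nsucc r a ≤ a) :
    (∀ w, r a w → w ≤ a) ∧ (∀ w, r a w → nsucc r a ≤ w) := by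
  classical
  have hmax : ∀ w, r a w → w ≤ a := by
    intro w hw
    by_contra hlt
    push_neg at hlt
    exact absurd h (not_le.2 (nsucc_gt hw hlt).1)
  have hneg : ¬ ((cls r a).filter (fun c => a < c)).Nonempty := by
    rintro ⟨b, hb⟩
    rw [Finset.mem_filter, mem_cls] at hb
    exact absurd (hmax b hb.1) (not_le.2 hb.2)
  refine ⟨hmax, fun w hw => ?_⟩
  unfold nsucc
  rw [dif_neg hneg]
  exact Finset.min'_le _ w (mem_cls.2 hw)

lemma nsucc_eq_of_consec {r : Setoid (Fin k)} {s t : Fin k} (hr : r s t) (hst : s < t)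
    (hmin : ∀ w, r s w → s < w → t ≤ w) : nsucc r s = t := by
  have h1 := nsucc_gt hr hst
  exact le_antisymm h1.2 (hmin _ (nsucc_rel r s) h1.1)

lemma nsucc_inj {r : Setoid (Fin k)} : Function.Injective (nsucc r) := by
  intro a b hab
  by_contra hne
  have hras : r a (nsucc r a) := nsucc_rel r a
  have hrbs : r b (nsucc r b) := nsucc_rel r b
  have hrab : r a b := r.trans' hras (by rw [hab]; exact r.symm' hrbs)
  rcases le_or_gt (nsucc r a) a with ha | ha
  · rcases le_or_gt (nsucc r b) b with hb | hb
    · -- both are maxima of the same class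
      have h1 := (nsucc_wrap ha).1 b hrab
      have h2 := (nsucc_wrap hb).1 a (r.symm' hrab)
      exact hne (le_antisymm h2 h1)
    · -- nsucc a = min class ≤ b but nsucc b > b
      have h1 := (nsucc_wrap ha).2 b hrab
      rw [hab] at h1
      exact absurd h1 (not_le.2 hb)
  · rcases le_or_gt (nsucc r b) b with hb | hb
    · have h1 := (nsucc_wrap hb).2 a (r.symm' hrab)
      rw [← hab] at h1
      exact absurd h1 (not_le.2 ha)
    · -- both strict: least elt greater than a and greater than b coincide
      rcases lt_trichotomy a b with h | h | h
      · have := nsucc_le_of_gt ha hrab h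
        rw [hab] at this
        exact absurd hb (not_lt.2 this)
      · exact hne h
      · have := nsucc_le_of_gt hb (r.symm' hrab) h
        rw [← hab] at this
        exact absurd ha (not_lt.2 this)

lemma nsucc_surj {r : Setoid (Fin k)} : Function.Surjective (nsucc r) :=
  Finite.surjective_of_injective nsucc_inj

/-- the relation of the standard noncrossing pair partition associated to `r` -/
def GRel (r : Setoid (Fin k)) (x y : Fin (2*k)) : Prop :=
  x = y ∨ (∃ a, x = od a ∧ y = ev (nsucc r a)) ∨ (∃ a, y = od a ∧ x = ev (nsucc r a))

/-- the standard noncrossing pair partition associated to `r` -/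
def G (r : Setoid (Fin k)) : Setoid (Fin (2*k)) :=
  ⟨GRel r, by
    refine ⟨fun x => Or.inl rfl, ?_, ?_⟩
    · rintro x y (rfl | h | h)
      · exact Or.inl rfl
      · exact Or.inr (Or.inr h)
      · exact Or.inr (Or.inl h)
    · rintro x y z (rfl | ⟨a, rfl, rfl⟩ | ⟨a, rfl, rfl⟩) h2
      · exact h2
      · rcases h2 with he | ⟨b, hb1, hb2⟩ | ⟨b, hb1, hb2⟩
        · rw [← he]; exact Or.inr (Or.inl ⟨a, rfl, rfl⟩)
        · exact absurd hb1 ev_ne_od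
        · exact Or.inl (by rw [hb1, nsucc_inj (ev_inj hb2)])
      · rcases h2 with he | ⟨b, hb1, hb2⟩ | ⟨b, hb1, hb2⟩
        · rw [← he]; exact Or.inr (Or.inr ⟨a, rfl, rfl⟩)
        · exact Or.inl (by rw [hb2, od_inj hb1])
        · exact absurd hb2.symm ev_ne_od⟩


lemma G_rel_odd (r : Setoid (Fin k)) (a : Fin k) : G r (od a) (ev (nsucc r a)) :=
  Or.inr (Or.inl ⟨a, rfl, rfl⟩)

lemma G_odd_not_rel {r : Setoid (Fin k)} {a b : Fin k} (h : a ≠ b) : ¬ G r (od a) (od b) := by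
  rintro (he | ⟨c, hc1, hc2⟩ | ⟨c, hc1, hc2⟩)
  · exact h (od_inj he)
  · exact ev_ne_od hc2.symm
  · exact ev_ne_od hc2.symm

end NCPP
namespace NCPP
open Setoid
variable {k : ℕ}

lemma ev_or_od (y : Fin (2*k)) : y = ev (dd y) ∨ y = od (dd y) := by
  rcases Nat.even_or_odd y.val with ⟨c, hc⟩ | ⟨c, hc⟩
  · left; apply Fin.ext; show y.val = 2*(y.val/2); omega
  · right; apply Fin.ext; show y.val = 2*(y.val/2)+1; omega

lemma G_isPair (r : Setoid (Fin k)) : IsPairPartition (G r) := by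
  rintro c ⟨y, rfl⟩
  rcases ev_or_od y with hy | hy
  · obtain ⟨a, ha⟩ := nsucc_surj (r := r) (dd y)
    have : {x | G r x y} = {y, od a} := by
      ext x
      constructor
      · rintro (rfl | ⟨w, hw1, hw2⟩ | ⟨w, hw1, hw2⟩)
        · exact Or.inl rfl
        · rw [hy] at hw2
          have : w = a := nsucc_inj (by rw [ha]; exact (ev_inj hw2).symm)
          rw [hw1, this]; exact Or.inr rfl
        · rw [hy] at hw1; exact absurd hw1 ev_ne_od
      · rintro (rfl | rfl)
        · exact Or.inl rfl
        · exact Or.inr (Or.inl ⟨a, rfl, by rw [ha, ← hy]⟩)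
    rw [this]
    exact Set.ncard_pair (by rw [hy]; exact ev_ne_od)
  · set a := dd y with hay
    have : {x | G r x y} = {y, ev (nsucc r a)} := by
      ext x
      constructor
      · rintro (rfl | ⟨w, hw1, hw2⟩ | ⟨w, hw1, hw2⟩)
        · exact Or.inl rfl
        · rw [hy] at hw2; exact absurd hw2.symm ev_ne_od
        · rw [hy] at hw1
          rw [hw2, od_inj hw1]; exact Or.inr rfl
      · rintro (rfl | rfl)
        · exact Or.inl rfl
        · exact Or.inr (Or.inr ⟨a, hy, rfl⟩)
    rw [this]
    exact Set.ncard_pair (by rw [hy]; exact fun h => ev_ne_od h.symm)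

/-- the shape of a sorted pair of `G r` -/
lemma G_pair_form {r : Setoid (Fin k)} {x y : Fin (2*k)} (h : G r x y) (hxy : x < y) :
    (∃ a, x = od a ∧ y = ev (nsucc r a) ∧ a < nsucc r a) ∨
    (∃ a, y = od a ∧ x = ev (nsucc r a) ∧ nsucc r a ≤ a) := by
  rcases h with he | ⟨a, h1, h2⟩ | ⟨a, h1, h2⟩
  · exact absurd he (ne_of_lt hxy)
  · left
    refine ⟨a, h1, h2, ?_⟩
    rw [h1, h2] at hxy
    exact od_lt_ev.1 hxy
  · right
    refine ⟨a, h1, h2, ?_⟩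
    rw [h1, h2] at hxy
    exact ev_lt_od.1 hxy

/-- `G r` is noncrossing when `r` is -/
lemma G_nc {r : Setoid (Fin k)} (hr : IsNoncrossing r) : IsNoncrossing (G r) := by
  rintro ⟨x1, x2, x3, x4, h12, h23, h34, h13, h24, -⟩
  rcases G_pair_form h13 (h12.trans h23) with ⟨a, rfl, rfl, ha⟩ | ⟨a, h1, h2, ha⟩
  · -- first pair short : (od a, ev (nsucc a))
    rcases G_pair_form h24 (h23.trans h34) with ⟨b, rfl, rfl, hb⟩ | ⟨b, h1', h2', hb⟩
    · -- second short : (od b, ev (nsucc b))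
      have e1 : a < b := od_lt_od.1 h12
      have e2 : b < nsucc r a := od_lt_ev.1 h23
      have e3 : nsucc r a < nsucc r b := ev_lt_ev.1 h34
      by_cases hab : r a b
      · exact absurd (nsucc_le_of_gt ha hab e1) (not_le.2 e2)
      · exact hr ⟨a, b, nsucc r a, nsucc r b, e1, e2, e3, nsucc_rel r a, nsucc_rel r b, hab⟩
    · -- second wrap : x2 = ev (nsucc b), x4 = od b
      subst h1'; subst h2'
      have e1 : a < nsucc r b := od_lt_ev.1 h12
      have e2 : nsucc r b < nsucc r a := ev_lt_ev.1 h23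
      have e3 : nsucc r a ≤ b := ev_lt_od.1 h34
      by_cases hab : r a b
      · exact absurd ((nsucc_wrap hb).2 a (r.symm' hab)) (not_le.2 e1)
      · have hne : nsucc r a < b := by
          rcases lt_or_eq_of_le e3 with h | h
          · exact h
          · exact absurd (h ▸ nsucc_rel r a) hab
        refine hr ⟨a, nsucc r b, nsucc r a, b, e1, e2, hne, nsucc_rel r a,
          r.symm' (nsucc_rel r b), fun hc => hab (r.trans' hc (r.symm' (nsucc_rel r b)))⟩
  · -- first pair wrap : x1 = ev (nsucc a), x3 = od a
    subst h1; subst h2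
    rcases G_pair_form h24 (h23.trans h34) with ⟨b, rfl, rfl, hb⟩ | ⟨b, h1', h2', hb⟩
    · -- second short : (od b, ev (nsucc b))
      have e1 : nsucc r a ≤ b := ev_lt_od.1 h12
      have e2 : b < a := od_lt_od.1 h23
      have e3 : a < nsucc r b := od_lt_ev.1 h34
      by_cases hab : r a b
      · exact absurd ((nsucc_wrap ha).1 (nsucc r b) (r.trans' hab (nsucc_rel r b))) (not_le.2 e3)
      · have hne : nsucc r a < b := by
          rcases lt_or_eq_of_le e1 with h | h
          · exact h
          · exact absurd (h ▸ nsucc_rel r a) hab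
        refine hr ⟨nsucc r a, b, a, nsucc r b, hne, e2, e3, r.symm' (nsucc_rel r a),
          nsucc_rel r b, fun hc => hab (r.trans' (nsucc_rel r a) hc)⟩
    · -- second wrap : x2 = ev (nsucc b), x4 = od b
      subst h1'; subst h2'
      have e1 : nsucc r a < nsucc r b := ev_lt_ev.1 h12
      have e2 : nsucc r b ≤ a := ev_lt_od.1 h23
      have e3 : a < b := od_lt_od.1 h34
      by_cases hab : r a b
      · exact absurd ((nsucc_wrap ha).1 b hab) (not_le.2 e3)
      · have hne : nsucc r b < a := by
          rcases lt_or_eq_of_le e2 with h | h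
          · exact h
          · exact absurd (r.symm' (show r b a by rw [← h]; exact nsucc_rel r b)) hab
        refine hr ⟨nsucc r a, nsucc r b, a, b, e1, hne, e3, r.symm' (nsucc_rel r a),
          r.symm' (nsucc_rel r b), fun hc =>
            hab (r.trans' (r.trans' (nsucc_rel r a) hc) (r.symm' (nsucc_rel r b)))⟩

end NCPP
namespace NCPP
open Setoid
variable {k : ℕ}

/-- applying a `≤` between setoids -/
lemma le_rel {α : Type*} {r s : Setoid α} (h : r ≤ s) {x y : α} (hxy : r x y) : s x y :=
  Setoid.le_def.1 h hxy

lemma rel_le {α : Type*} {r s : Setoid α} (h : ∀ x y, r x y → s x y) : r ≤ s :=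
  Setoid.le_def.2 fun {x y} => h x y

/-- find a consecutive class pair straddling a position `z` not in the class -/
lemma around {r : Setoid (Fin k)} {w z w' : Fin k} (hww' : r w w') (hwz : w < z)
    (hzw' : z < w') (hz : ¬ r w z) :
    ∃ s t, r w s ∧ w ≤ s ∧ s < z ∧ z < t ∧ t ≤ w' ∧ nsucc r s = t := by
  classical
  set F := (cls r w).filter (fun b => b < z) with hF
  set T := (cls r w).filter (fun b => z < b) with hT
  have hwF : w ∈ F := by rw [hF, Finset.mem_filter, mem_cls]; exact ⟨r.refl' w, hwz⟩
  have hwT : w' ∈ T := by rw [hT, Finset.mem_filter, mem_cls]; exact ⟨hww', hzw'⟩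
  set s := F.max' ⟨w, hwF⟩ with hs
  set t := T.min' ⟨w', hwT⟩ with ht
  have hsF : s ∈ F := F.max'_mem _
  have htT : t ∈ T := T.min'_mem _
  rw [hF, Finset.mem_filter, mem_cls] at hsF
  rw [hT, Finset.mem_filter, mem_cls] at htT
  refine ⟨s, t, hsF.1, F.le_max' w hwF, hsF.2, htT.2, T.min'_le w' hwT, ?_⟩
  apply nsucc_eq_of_consec (r.trans' (r.symm' hsF.1) htT.1) (hsF.2.trans htT.2)
  intro u hu hsu
  have hwu : r w u := r.trans' hsF.1 hu
  rcases lt_trichotomy u z with h | h | h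
  · have : u ∈ F := by rw [hF, Finset.mem_filter, mem_cls]; exact ⟨hwu, h⟩
    exact absurd (F.le_max' u this) (not_le.2 hsu)
  · exact absurd (h ▸ hwu) hz
  · exact T.min'_le u (by rw [hT, Finset.mem_filter, mem_cls]; exact ⟨hwu, h⟩)

lemma nc_of_G_nc {r : Setoid (Fin k)} (h : IsNoncrossing (G r)) : IsNoncrossing r := by
  rintro ⟨a, c, b, d, hac, hcb, hbd, hab, hcd, hnac⟩
  have hncb : ¬ r c b := fun hcb' => hnac (r.trans' hab (r.symm' hcb'))
  obtain ⟨s, t, hras, -, hsc, hct, htb, hst⟩ := around hab hac hcb hnac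
  obtain ⟨u, v, hrcu, hcu, hub, hbv, -, huv⟩ := around hcd hcb hbd hncb
  rcases lt_or_ge u t with hut | htu
  · -- interleaved already : s < u < t < v
    have hsu : s < u := lt_of_lt_of_le hsc hcu
    have hsune : s ≠ u := fun he => hnac (r.trans' hras (r.symm' (he ▸ hrcu)))
    refine h ⟨od s, od u, ev t, ev v, od_lt_od.2 hsu, od_lt_ev.2 hut,
      ev_lt_ev.2 (lt_of_le_of_lt htb hbv), ?_, ?_, G_odd_not_rel hsune⟩
    · rw [← hst]; exact G_rel_odd r s
    · rw [← huv]; exact G_rel_odd r u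
  · have hrat : r a t := r.trans' hras (hst ▸ nsucc_rel r s)
    have htune : t ≠ u := fun he => hnac (r.trans' hrat (r.symm' (he ▸ hrcu)))
    have htu' : t < u := lt_of_le_of_ne htu htune
    have hrtb : r t b := r.trans' (r.symm' hrat) hab
    have hntu : ¬ r t u := fun h' =>
      hnac (r.trans' (r.trans' hrat h') (r.symm' hrcu))
    obtain ⟨s', t', hrts', -, hs'u, hut', ht'b, hs't'⟩ := around hrtb htu' hub hntu
    have hs'une : s' ≠ u := fun he =>
      hnac (r.trans' (r.trans' hrat hrts') (r.symm' (he ▸ hrcu)))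
    refine h ⟨od s', od u, ev t', ev v, od_lt_od.2 hs'u, od_lt_ev.2 hut',
      ev_lt_ev.2 (lt_of_le_of_lt ht'b hbv), ?_, ?_, G_odd_not_rel hs'une⟩
    · rw [← hs't']; exact G_rel_odd r s'
    · rw [← huv]; exact G_rel_odd r u

/-- joining `G r` with the matching `m` gives the inflated copy of `r` -/
lemma chain_aux (r : Setoid (Fin k)) :
    ∀ n (a b : Fin k), a ≤ b → b.val - a.val ≤ n → r a b →
      (G r ⊔ mSetoid k) (ev a) (ev b) := by
  intro n
  induction n with
  | zero =>
    intro a b hab hn _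
    have : a = b := by
      apply Fin.ext
      rw [Fin.le_def] at hab
      omega
    rw [this]
  | succ n ih =>
    intro a b hab hn hr
    rcases eq_or_lt_of_le hab with he | hlt
    · rw [he]
    · obtain ⟨h1, h2⟩ := nsucc_gt hr hlt
      have step1 : (G r ⊔ mSetoid k) (ev a) (od a) := le_rel le_sup_right (m_ev_od a)
      have step2 : (G r ⊔ mSetoid k) (od a) (ev (nsucc r a)) := le_rel le_sup_left (G_rel_odd r a)
      have step3 : (G r ⊔ mSetoid k) (ev (nsucc r a)) (ev b) := by
        apply ih _ _ h2
        · rw [Fin.lt_def] at h1; rw [Fin.le_def] at *; omega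
        · exact r.trans' (r.symm' (nsucc_rel r a)) hr
      exact (G r ⊔ mSetoid k).trans' (Setoid.trans' _ step1 step2) step3

lemma G_sup_m (r : Setoid (Fin k)) : G r ⊔ mSetoid k = Phi r := by
  apply le_antisymm
  · refine sup_le (rel_le ?_) (m_le_Phi r)
    rintro x y (rfl | ⟨a, rfl, rfl⟩ | ⟨a, rfl, rfl⟩)
    · exact (Phi r).refl' _
    · show r (dd (od a)) (dd (ev (nsucc r a)))
      rw [dd_od, dd_ev]; exact nsucc_rel r a
    · show r (dd (ev (nsucc r a))) (dd (od a))
      rw [dd_od, dd_ev]; exact r.symm' (nsucc_rel r a)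
  · apply rel_le
    intro x y h
    have h' : r (dd x) (dd y) := h
    have h1 : (G r ⊔ mSetoid k) x (ev (dd x)) := le_rel le_sup_right (m_self_ev x)
    have h2 : (G r ⊔ mSetoid k) y (ev (dd y)) := le_rel le_sup_right (m_self_ev y)
    have hmid : (G r ⊔ mSetoid k) (ev (dd x)) (ev (dd y)) := by
      rcases le_total (dd x) (dd y) with hle | hle
      · exact chain_aux r _ _ _ hle le_rfl h'
      · exact Setoid.symm' _ (chain_aux r _ _ _ hle le_rfl (r.symm' h'))
    exact Setoid.trans' _ (Setoid.trans' _ h1 hmid) (Setoid.symm' _ h2)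

end NCPP
namespace NCPP
open Setoid
variable {k N : ℕ}

section Partner
variable {p : Setoid (Fin N)}

lemma pair_spec (hp : IsPairPartition p) (x : Fin N) :
    ∃ y, y ≠ x ∧ p x y ∧ ∀ z, p x z → z = x ∨ z = y := by
  have hc : {z | p z x} ∈ p.classes := p.mem_classes x
  have h2 : {z | p z x}.ncard = 2 := hp _ hc
  obtain ⟨u, v, huv, he⟩ := Set.ncard_eq_two.1 h2
  have hx : x ∈ {z | p z x} := p.refl' x
  rw [he] at hx
  have hmem : ∀ z, p x z ↔ (z = u ∨ z = v) := by
    intro z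
    constructor
    · intro h
      have : z ∈ {z | p z x} := p.symm' h
      rw [he] at this
      exact this
    · intro h
      have : z ∈ {z | p z x} := by rw [he]; exact h
      exact p.symm' this
  rcases hx with rfl | rfl
  · exact ⟨v, fun h => huv h.symm, (hmem v).2 (Or.inr rfl), fun z hz => (hmem z).1 hz⟩
  · exact ⟨u, huv, (hmem u).2 (Or.inl rfl), fun z hz => ((hmem z).1 hz).symm⟩

/-- the partner function of a pair partition -/
noncomputable def partner (hp : IsPairPartition p) (x : Fin N) : Fin N :=
  Classical.choose (pair_spec hp x)

lemma partner_ne (hp : IsPairPartition p) (x : Fin N) : partner hp x ≠ x :=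
  (Classical.choose_spec (pair_spec hp x)).1

lemma partner_rel (hp : IsPairPartition p) (x : Fin N) : p x (partner hp x) :=
  (Classical.choose_spec (pair_spec hp x)).2.1

lemma partner_eq (hp : IsPairPartition p) {x z : Fin N} (h : p x z) :
    z = x ∨ z = partner hp x :=
  (Classical.choose_spec (pair_spec hp x)).2.2 z h

lemma partner_invol (hp : IsPairPartition p) (x : Fin N) :
    partner hp (partner hp x) = x := by
  rcases partner_eq hp (p.symm' (partner_rel hp x)) with h | h
  · exact absurd h.symm (partner_ne hp x)
  · exact h.symm

lemma rel_iff_partner (hp : IsPairPartition p) {x z : Fin N} :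
    p x z ↔ z = x ∨ z = partner hp x := by
  refine ⟨partner_eq hp, ?_⟩
  rintro (rfl | rfl)
  · exact p.refl' _
  · exact partner_rel hp _

lemma pair_le_eq {q : Setoid (Fin N)} (hp : IsPairPartition p) (hq : IsPairPartition q)
    (h : p ≤ q) : p = q := by
  have hpq : ∀ x, partner hq x = partner hp x := by
    intro x
    rcases partner_eq hq (le_rel h (partner_rel hp x)) with h' | h'
    · exact absurd h' (partner_ne hp x)
    · exact h'.symm
  ext x y
  rw [rel_iff_partner hp, rel_iff_partner hq, hpq]

/-- midpoints of a pair are matched inside the pair -/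
lemma mid (hp : IsPairPartition p) (hnc : IsNoncrossing p) {x z : Fin N}
    (h1 : x < z) (h2 : z < partner hp x) : x < partner hp z ∧ partner hp z < partner hp x := by
  have hne1 : partner hp z ≠ x := by
    intro h
    have := partner_invol hp z
    rw [h] at this
    exact absurd this.symm (ne_of_lt h2)
  have hne2 : partner hp z ≠ partner hp x := by
    intro h
    have := congrArg (partner hp) h
    rw [partner_invol, partner_invol] at this
    exact absurd this (ne_of_gt h1)
  constructor
  · rcases lt_or_gt_of_ne hne1 with h | h
    · exfalso
      refine hnc ⟨partner hp z, x, z, partner hp x, h, h1, h2,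
        p.symm' (partner_rel hp z), partner_rel hp x, ?_⟩
      intro hc
      rcases partner_eq hp hc with h' | h'
      · exact absurd h' h.ne'
      · rw [partner_invol] at h'
        exact absurd h' h1.ne
    · exact h
  · rcases lt_or_gt_of_ne hne2 with h | h
    · exact h
    · exfalso
      refine hnc ⟨x, z, partner hp x, partner hp z, h1, h2, h,
        partner_rel hp x, partner_rel hp z, ?_⟩
      intro hc
      rcases partner_eq hp hc with h' | h'
      · exact absurd h' (ne_of_gt h1)
      · exact absurd h' (ne_of_lt h2)

end Partner

lemma even_card_invol {α : Type*} [DecidableEq α] (s : Finset α) (f : α → α)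
    (h1 : ∀ a ∈ s, f a ∈ s) (h2 : ∀ a ∈ s, f (f a) = a) (h3 : ∀ a ∈ s, f a ≠ a) :
    Even s.card := by
  induction s using Finset.strongInduction with
  | _ s ih =>
    rcases s.eq_empty_or_nonempty with rfl | ⟨a, ha⟩
    · simp
    · set s' := (s.erase a).erase (f a) with hs'
      have hfa : f a ∈ s.erase a := Finset.mem_erase.2 ⟨h3 a ha, h1 a ha⟩
      have hsub : s' ⊆ s := (Finset.erase_subset _ _).trans (Finset.erase_subset _ _)
      have hss : s' ⊂ s := Finset.ssubset_iff_of_subset hsub |>.2 ⟨a, ha, by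
        rw [hs']
        intro hc
        exact (Finset.mem_erase.1 ((Finset.erase_subset _ _) hc)).1 rfl⟩
      have hmem : ∀ b ∈ s', b ∈ s ∧ b ≠ a ∧ b ≠ f a := by
        intro b hb
        rw [hs', Finset.mem_erase, Finset.mem_erase] at hb
        exact ⟨hb.2.2, hb.2.1, hb.1⟩
      have h1' : ∀ b ∈ s', f b ∈ s' := by
        intro b hb
        obtain ⟨hbs, hba, hbfa⟩ := hmem b hb
        rw [hs', Finset.mem_erase, Finset.mem_erase]
        refine ⟨?_, ?_, h1 b hbs⟩
        · intro hc
          apply hba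
          rw [← h2 b hbs, hc, h2 a ha]
        · intro hc
          apply hbfa
          rw [← h2 b hbs, hc]
      have hcard : s.card = s'.card + 2 := by
        have c1 : (s.erase a).card = s.card - 1 := Finset.card_erase_of_mem ha
        have c2 : s'.card = (s.erase a).card - 1 := Finset.card_erase_of_mem hfa
        have : 1 ≤ s.card := Finset.card_pos.2 ⟨a, ha⟩
        have : 1 ≤ (s.erase a).card := Finset.card_pos.2 ⟨f a, hfa⟩
        omega
      obtain ⟨c, hcEq⟩ := ih s' hss (fun b hb => h1' b hb) (fun b hb => h2 b (hmem b hb).1)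
        (fun b hb => h3 b (hmem b hb).1)
      exact ⟨c + 1, by omega⟩

end NCPP
namespace NCPP
open Setoid
variable {k N : ℕ}

lemma even_Ioo_partner {p : Setoid (Fin N)} (hp : IsPairPartition p) (hnc : IsNoncrossing p)
    {x y : Fin N} (hxy : x < y) (hpy : partner hp x = y) : Even (Finset.Ioo x y).card := by
  apply even_card_invol _ (partner hp)
  · intro z hz
    rw [Finset.mem_Ioo] at *
    rw [← hpy]
    exact mid hp hnc hz.1 (by rw [hpy]; exact hz.2)
  · intro z _; exact partner_invol hp z
  · intro z _; exact fun h => partner_ne hp z h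

lemma partner_parity {p : Setoid (Fin N)} (hp : IsPairPartition p) (hnc : IsNoncrossing p)
    (x : Fin N) : (partner hp x).val % 2 ≠ x.val % 2 := by
  rcases lt_trichotomy x (partner hp x) with h | h | h
  · have := even_Ioo_partner hp hnc h rfl
    rw [Fin.card_Ioo] at this
    obtain ⟨c, hc⟩ := this
    rw [Fin.lt_def] at h
    omega
  · exact absurd h.symm (partner_ne hp x)
  · have := even_Ioo_partner hp hnc h (partner_invol hp x)
    rw [Fin.card_Ioo] at this
    obtain ⟨c, hc⟩ := this
    rw [Fin.lt_def] at h
    omega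

/-- membership behaves well under joins of setoids that both preserve a set -/
lemma sup_closed {s t : Setoid (Fin N)} {A : Set (Fin N)}
    (hs : ∀ x y, s x y → (x ∈ A ↔ y ∈ A)) (ht : ∀ x y, t x y → (x ∈ A ↔ y ∈ A))
    {x y : Fin N} (h : (s ⊔ t) x y) : x ∈ A ↔ y ∈ A := by
  have hK : s ⊔ t ≤ Setoid.ker (fun z => (z ∈ A : Prop)) := by
    apply sup_le
    · exact rel_le fun x y hxy => propext (hs x y hxy)
    · exact rel_le fun x y hxy => propext (ht x y hxy)
  exact iff_of_eq (le_rel hK h)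

/-- Structure theorem: a noncrossing pair partition pairs each odd point with the
even point of the successor block in `p ⊔ m`. -/
lemma struct {p : Setoid (Fin (2*k))} (hp : IsPairPartition p) (hnc : IsNoncrossing p)
    (a : Fin k) : p (od a) (ev (nsucc (Psi (p ⊔ mSetoid k)) a)) := by
  set r := Psi (p ⊔ mSetoid k) with hr
  have hyev : (partner hp (od a)).val % 2 = 0 := by
    have := partner_parity hp hnc (od a)
    have h1 : (od a).val = 2*a.val+1 := rfl
    omega
  set b := dd (partner hp (od a)) with hb
  have hkey : partner hp (od a) = ev b := by
    apply Fin.ext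
    show (partner hp (od a)).val = 2*((partner hp (od a)).val/2)
    omega
  have hpab : p (od a) (ev b) := by rw [← hkey]; exact partner_rel hp (od a)
  have hprab : ∀ w : Fin k, r a w ↔ (p ⊔ mSetoid k) (ev a) (ev w) := fun w => Iff.rfl
  have hrab : r a b := by
    rw [hprab]
    have s1 : (p ⊔ mSetoid k) (ev a) (od a) := le_rel le_sup_right (m_ev_od a)
    have s2 : (p ⊔ mSetoid k) (od a) (ev b) := le_rel le_sup_left hpab
    exact Setoid.trans' _ s1 s2
  -- p-closure transfer through partner
  have pclose : ∀ (A : Set (Fin (2*k))), (∀ z, z ∈ A → partner hp z ∈ A) →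
      ∀ z w, p z w → (z ∈ A ↔ w ∈ A) := by
    intro A hA z w hzw
    rcases partner_eq hp hzw with rfl | rfl
    · exact Iff.rfl
    · exact ⟨hA z, fun hw => by rw [← partner_invol hp z]; exact hA _ hw⟩
  rcases lt_trichotomy a b with hab | hab | hab
  · -- short pair
    set A : Set (Fin (2*k)) := {z | od a < z ∧ z < ev b} with hA
    have hApart : ∀ z, z ∈ A → partner hp z ∈ A := by
      intro z hz
      have := mid hp hnc hz.1 (by rw [hkey]; exact hz.2)
      rw [hkey] at this
      exact this
    have hmc : ∀ z w, mSetoid k z w → (z ∈ A ↔ w ∈ A) := by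
      intro z w hzw
      have hzw' : z.val / 2 = w.val / 2 := hzw
      have hmem : ∀ u : Fin (2*k), u ∈ A ↔ (2*a.val+1 < u.val ∧ u.val < 2*b.val) := fun u => Iff.rfl
      rw [hmem z, hmem w]
      omega
    have hmin : ∀ w, r a w → a < w → b ≤ w := by
      intro w hw haw
      by_contra hwb
      push_neg at hwb
      have hwA : ev w ∈ A := by
        rw [Fin.lt_def] at haw hwb
        exact ⟨show 2*a.val+1 < 2*w.val by omega, show 2*w.val < 2*b.val by omega⟩
      have haA : ev a ∉ A := by
        intro hc
        have : 2*a.val+1 < 2*a.val := hc.1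
        omega
      exact haA ((sup_closed (pclose A hApart) hmc ((hprab w).1 hw)).2 hwA)
    rw [nsucc_eq_of_consec hrab hab hmin]
    exact hpab
  · -- singleton class
    have hkey2 : partner hp (ev b) = od a := by rw [← hkey, partner_invol]
    have hclass : ∀ w, r a w → w = a := by
      intro w hw
      set A : Set (Fin (2*k)) := {ev a, od a} with hA
      have hApart : ∀ z, z ∈ A → partner hp z ∈ A := by
        rintro z (rfl | rfl)
        · right
          show partner hp (ev a) = od a
          rw [show (ev a : Fin (2*k)) = ev b by rw [hab]]
          exact hkey2
        · left
          show partner hp (od a) = ev a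
          rw [hkey, ← hab]
      have hmc : ∀ z w, mSetoid k z w → (z ∈ A ↔ w ∈ A) := by
        intro z w hzw
        have hzw' : z.val / 2 = w.val / 2 := hzw
        have hmem : ∀ u : Fin (2*k), u ∈ A ↔ (u.val = 2*a.val ∨ u.val = 2*a.val+1) := by
          intro u
          constructor
          · rintro (rfl | rfl)
            · exact Or.inl rfl
            · exact Or.inr rfl
          · rintro (h | h)
            · left; apply Fin.ext; exact h
            · right; apply Fin.ext; exact h
        rw [hmem z, hmem w]
        omega
      have hwA : ev w ∈ A := by
        apply (sup_closed (pclose A hApart) hmc ((hprab w).1 hw)).1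
        exact Or.inl rfl
      rcases hwA with h | h
      · exact ev_inj h
      · exact absurd h ev_ne_od
    have hna : nsucc r a = a := hclass _ (nsucc_rel r a)
    rw [hna, show (ev a : Fin (2*k)) = ev b by rw [hab]]
    exact hpab
  · -- wrap : b < a
    have hkey2 : partner hp (ev b) = od a := by rw [← hkey, partner_invol]
    have hba : ev b < od a := by
      rw [Fin.lt_def] at hab ⊢
      show 2*b.val < 2*a.val+1
      omega
    set A : Set (Fin (2*k)) := {z | ev b ≤ z ∧ z ≤ od a} with hA
    have hApart : ∀ z, z ∈ A → partner hp z ∈ A := by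
      intro z hz
      rcases eq_or_lt_of_le hz.1 with he | hlt1
      · rw [← he, hkey2]
        exact ⟨le_of_lt hba, le_rfl⟩
      · rcases eq_or_lt_of_le hz.2 with he | hlt2
        · rw [he, hkey]
          exact ⟨le_rfl, le_of_lt hba⟩
        · have := mid hp hnc hlt1 (by rw [hkey2]; exact hlt2)
          rw [hkey2] at this
          exact ⟨le_of_lt this.1, le_of_lt this.2⟩
    have hmc : ∀ z w, mSetoid k z w → (z ∈ A ↔ w ∈ A) := by
      intro z w hzw
      have hzw' : z.val / 2 = w.val / 2 := hzw
      have hmem : ∀ u : Fin (2*k), u ∈ A ↔ (2*b.val ≤ u.val ∧ u.val ≤ 2*a.val+1) := fun u => Iff.rfl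
      rw [hmem z, hmem w]
      omega
    have hbound : ∀ w, r a w → b ≤ w ∧ w ≤ a := by
      intro w hw
      have haA : ev a ∈ A := by
        rw [Fin.lt_def] at hab
        exact ⟨show 2*b.val ≤ 2*a.val by omega, show 2*a.val ≤ 2*a.val+1 by omega⟩
      have hwA : ev w ∈ A := (sup_closed (pclose A hApart) hmc ((hprab w).1 hw)).1 haA
      have w1 : 2*b.val ≤ 2*w.val := hwA.1
      have w2 : 2*w.val ≤ 2*a.val+1 := hwA.2
      rw [Fin.le_def, Fin.le_def]
      omega
    have hwrap : nsucc r a ≤ a := (hbound _ (nsucc_rel r a)).2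
    have h1 : nsucc r a ≤ b := (nsucc_wrap hwrap).2 b hrab
    have h2 : b ≤ nsucc r a := (hbound _ (nsucc_rel r a)).1
    rw [le_antisymm h1 h2]
    exact hpab

end NCPP
namespace NCPP
open Setoid
variable {k : ℕ}

lemma eq_G {p : Setoid (Fin (2*k))} (hp : IsPairPartition p) (hnc : IsNoncrossing p) :
    p = G (Psi (p ⊔ mSetoid k)) := by
  refine (pair_le_eq (G_isPair _) hp (rel_le ?_)).symm
  rintro x y (rfl | ⟨a, rfl, rfl⟩ | ⟨a, rfl, rfl⟩)
  · exact p.refl' _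
  · exact struct hp hnc a
  · exact p.symm' (struct hp hnc a)

end NCPP

theorem count_nc_pair_partitions_join_m' (k j : ℕ) :
    Nat.card {p : Setoid (Fin (2 * k)) //
        IsPairPartition p ∧ IsNoncrossing p ∧ (p ⊔ mSetoid k).classes.ncard = j}
      = Nat.card {q : Setoid (Fin k) // IsNoncrossing q ∧ q.classes.ncard = j}
    ∧ Set.BijOn (fun p => p ⊔ mSetoid k)
        {p : Setoid (Fin (2 * k)) | IsPairPartition p ∧ IsNoncrossing p}
        {q : Setoid (Fin (2 * k)) | IsNoncrossing q ∧ mSetoid k ≤ q} := by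
  open NCPP in
  constructor
  · refine Nat.card_congr
      ⟨fun x => ⟨Psi (x.1 ⊔ mSetoid k), ?_, ?_⟩,
       fun y => ⟨G y.1, G_isPair y.1, G_nc y.2.1, ?_⟩, ?_, ?_⟩
    · exact nc_of_G_nc (eq_G x.2.1 x.2.2.1 ▸ x.2.2.1)
    · have h := x.2.2.2
      rw [eq_G x.2.1 x.2.2.1, G_sup_m, ncard_classes_Phi] at h
      exact h
    · rw [G_sup_m, ncard_classes_Phi]
      exact y.2.2
    · intro x
      exact Subtype.ext (eq_G x.2.1 x.2.2.1).symm
    · intro y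
      apply Subtype.ext
      show Psi (G y.1 ⊔ mSetoid k) = y.1
      rw [G_sup_m, Psi_Phi]
  · refine ⟨?_, ?_, ?_⟩
    · rintro p ⟨hp, hnc⟩
      have heq := eq_G hp hnc
      constructor
      · show IsNoncrossing (p ⊔ mSetoid k)
        rw [heq, G_sup_m]
        exact nc_Phi_iff.2 (nc_of_G_nc (heq ▸ hnc))
      · exact le_sup_right
    · rintro p1 ⟨hp1, hnc1⟩ p2 ⟨hp2, hnc2⟩ hsup
      simp only at hsup
      rw [eq_G hp1 hnc1, eq_G hp2 hnc2, hsup]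
    · rintro q ⟨hncq, hmq⟩
      have hq : Phi (Psi q) = q := Phi_Psi hmq
      have hncr : IsNoncrossing (Psi q) := nc_Phi_iff.1 (by rw [hq]; exact hncq)
      refine ⟨G (Psi q), ⟨G_isPair _, G_nc hncr⟩, ?_⟩
      show G (Psi q) ⊔ mSetoid k = q
      rw [G_sup_m, hq]

/-- The number of noncrossing pair partitions `p` of `{1,…,2k}` with `|p ∨ m| = j` equals
the number of noncrossing partitions of `{1,…,k}` with exactly `j` blocks, and
`p ↦ p ∨ m` is a bijection from noncrossing pair partitions of `{1,…,2k}` onto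
noncrossing partitions of `{1,…,2k}` whose blocks are unions of blocks of `m`. -/
theorem count_nc_pair_partitions_join_m (k j : ℕ) (hj1 : 1 ≤ j) (hjk : j ≤ k) :
    Nat.card {p : Setoid (Fin (2 * k)) //
        IsPairPartition p ∧ IsNoncrossing p ∧ (p ⊔ mSetoid k).classes.ncard = j}
      = Nat.card {q : Setoid (Fin k) // IsNoncrossing q ∧ q.classes.ncard = j}
    ∧ Set.BijOn (fun p => p ⊔ mSetoid k)
        {p : Setoid (Fin (2 * k)) | IsPairPartition p ∧ IsNoncrossing p}
        {q : Setoid (Fin (2 * k)) | IsNoncrossing q ∧ mSetoid k ≤ q} :=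
  count_nc_pair_partitions_join_m' k j
end

section
/- If p ∨ m is a crossing partition of {1,...,2k}, then p itself is crossing, where m = {{1,2},...,{2k-1,2k}}. -/
/-- The setoid whose only nontrivial relation is `a ~ b`. -/
def pairSetoid {α : Type*} (a b : α) : Setoid α where
  r x y := x = y ∨ (x = a ∧ y = b) ∨ (x = b ∧ y = a)
  iseqv := by
    refine ⟨fun x => Or.inl rfl, ?_, ?_⟩
    · rintro x y (h | ⟨h1, h2⟩ | ⟨h1, h2⟩)
      · exact Or.inl h.symm
      · exact Or.inr (Or.inr ⟨h2, h1⟩)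
      · exact Or.inr (Or.inl ⟨h2, h1⟩)
    · rintro x y z (h | ⟨h1, h2⟩ | ⟨h1, h2⟩) (h' | ⟨h1', h2'⟩ | ⟨h1', h2'⟩) <;>
        subst_vars <;> tauto

lemma pairSetoid_rel {α : Type*} (a b x y : α) :
    pairSetoid a b x y ↔ x = y ∨ (x = a ∧ y = b) ∨ (x = b ∧ y = a) := Iff.rfl

/-- The setoid obtained from `r` by merging the classes of `a` and `b`. -/
def mergeSetoid {α : Type*} (r : Setoid α) (a b : α) : Setoid α where
  r x y := r x y ∨ (r x a ∧ r b y) ∨ (r x b ∧ r a y)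
  iseqv := by
    refine ⟨fun x => Or.inl (r.refl' x), ?_, ?_⟩
    · rintro x y (h | ⟨h1, h2⟩ | ⟨h1, h2⟩)
      · exact Or.inl (r.symm' h)
      · exact Or.inr (Or.inr ⟨r.symm' h2, r.symm' h1⟩)
      · exact Or.inr (Or.inl ⟨r.symm' h2, r.symm' h1⟩)
    · rintro x y z (h | ⟨h1, h2⟩ | ⟨h1, h2⟩) (h' | ⟨h1', h2'⟩ | ⟨h1', h2'⟩)
      · exact Or.inl (r.trans' h h')
      · exact Or.inr (Or.inl ⟨r.trans' h h1', h2'⟩)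
      · exact Or.inr (Or.inr ⟨r.trans' h h1', h2'⟩)
      · exact Or.inr (Or.inl ⟨h1, r.trans' h2 h'⟩)
      · exact Or.inl (r.trans' (r.trans' h1 (r.symm' (r.trans' h2 h1'))) h2')
      · exact Or.inl (r.trans' h1 h2')
      · exact Or.inr (Or.inr ⟨h1, r.trans' h2 h'⟩)
      · exact Or.inl (r.trans' h1 h2')
      · exact Or.inl (r.trans' (r.trans' h1 (r.symm' (r.trans' h2 h1'))) h2')

lemma mergeSetoid_rel {α : Type*} (r : Setoid α) (a b x y : α) :
    mergeSetoid r a b x y ↔ r x y ∨ (r x a ∧ r b y) ∨ (r x b ∧ r a y) := Iff.rfl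

/-- Characterization of the join of a setoid with a pair setoid. -/
lemma sup_pair_rel {α : Type*} (r : Setoid α) (a b x y : α) :
    (r ⊔ pairSetoid a b) x y ↔
      r x y ∨ (r x a ∧ r b y) ∨ (r x b ∧ r a y) := by
  have h1 : r ⊔ pairSetoid a b ≤ mergeSetoid r a b := by
    apply sup_le
    · intro x y h; exact Or.inl h
    · intro x y h
      rcases (pairSetoid_rel a b x y).mp h with h | ⟨h1, h2⟩ | ⟨h1, h2⟩
      · subst h; exact Or.inl (r.refl' x)
      · subst h1; subst h2; exact Or.inr (Or.inl ⟨r.refl' _, r.refl' _⟩)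
      · subst h1; subst h2; exact Or.inr (Or.inr ⟨r.refl' _, r.refl' _⟩)
  have h2 : mergeSetoid r a b ≤ r ⊔ pairSetoid a b := by
    have hr : r ≤ r ⊔ pairSetoid a b := le_sup_left
    have hs : pairSetoid a b ≤ r ⊔ pairSetoid a b := le_sup_right
    have hab : (r ⊔ pairSetoid a b) a b := hs (Or.inr (Or.inl ⟨rfl, rfl⟩))
    rintro x y h
    rcases (mergeSetoid_rel r a b x y).mp h with h | ⟨hxa, hby⟩ | ⟨hxb, hay⟩
    · exact hr h
    · exact Setoid.trans' _ (Setoid.trans' _ (hr hxa) hab) (hr hby)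
    · exact Setoid.trans' _ (Setoid.trans' _ (hr hxb) (Setoid.symm' _ hab)) (hr hay)
  exact ⟨fun h => h1 h, fun h => h2 h⟩

/-- From noncrossing: if `a < b < c < d`, `a ~ c`, `b ~ d`, then `a ~ b`. -/
lemma nc_rel {N : ℕ} {r : Setoid (Fin N)} (hr : IsNoncrossing r) {a b c d : Fin N}
    (h1 : a < b) (h2 : b < c) (h3 : c < d) (hac : r a c) (hbd : r b d) : r a b := by
  by_contra hab
  exact hr ⟨a, b, c, d, h1, h2, h3, hac, hbd, hab⟩

/-- Merging two blocks containing adjacent elements preserves noncrossingness. -/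
lemma merge_nc {N : ℕ} {r : Setoid (Fin N)} (hr : IsNoncrossing r) {a b : Fin N}
    (hab : (a : ℕ) + 1 = (b : ℕ)) : IsNoncrossing (r ⊔ pairSetoid a b) := by
  rintro ⟨p1, q1, p2, q2, h1, h2, h3, hp, hq, hn⟩
  rw [sup_pair_rel] at hp hq
  have hnab : ¬ ((r p1 a ∧ r b q1) ∨ (r p1 b ∧ r a q1)) := fun h =>
    hn ((sup_pair_rel r a b p1 q1).mpr (Or.inr h))
  have hn' : ¬ r p1 q1 := fun h => hn ((sup_pair_rel r a b p1 q1).mpr (Or.inl h))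
  rcases hp with hp | hp
  · rcases hq with hq | hq
    · exact hr ⟨p1, q1, p2, q2, h1, h2, h3, hp, hq, hn'⟩
    · -- q1 ~ α, β ~ q2 with {α,β} = {a,b}
      obtain ⟨α, β, hαβ, hq1α, hβq2⟩ :
          ∃ α β : Fin N, ((α : ℕ) + 1 = β ∨ (β : ℕ) + 1 = α) ∧ r q1 α ∧ r β q2 := by
        rcases hq with ⟨h4, h5⟩ | ⟨h4, h5⟩
        · exact ⟨a, b, Or.inl hab, h4, h5⟩
        · exact ⟨b, a, Or.inr hab, h4, h5⟩
      have hnq2 : ¬ r p1 q2 := by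
        intro h
        rcases hq with ⟨h4, h5⟩ | ⟨h4, h5⟩
        · exact hnab (Or.inr ⟨r.trans' h (r.symm' h5), r.symm' h4⟩)
        · exact hnab (Or.inl ⟨r.trans' h (r.symm' h5), r.symm' h4⟩)
      have hαp1 : p1 < α := by
        by_contra hc
        push_neg at hc
        rcases lt_or_eq_of_le hc with hc | hc
        · have hres : r α p1 := nc_rel hr hc h1 h2 (r.symm' hq1α) hp
          exact hn' (r.trans' (r.symm' hres) (r.symm' hq1α))
        · rw [hc] at hq1α; exact hn' (r.symm' hq1α)
      have hαp2 : α < p2 := by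
        by_contra hc
        push_neg at hc
        rcases lt_or_eq_of_le hc with hc | hc
        · exact hn' (nc_rel hr h1 h2 hc hp hq1α)
        · rw [← hc] at hq1α; exact hn' (r.trans' hp (r.symm' hq1α))
      have hβne1 : β ≠ p1 := by rintro rfl; exact hnq2 hβq2
      have hβne2 : β ≠ p2 := by rintro rfl; exact hnq2 (r.trans' hp hβq2)
      have hβp1 : p1 < β := by
        rw [Fin.lt_def] at *
        have := Fin.ext_iff.not.mp hβne1
        omega
      have hβp2 : β < p2 := by
        rw [Fin.lt_def] at *
        have := Fin.ext_iff.not.mp hβne2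
        omega
      have hres : r p1 β := nc_rel hr hβp1 hβp2 h3 hp hβq2
      exact hnq2 (r.trans' hres hβq2)
  · rcases hq with hq | hq
    · -- p1 ~ α, β ~ p2, with q1 ~ q2
      obtain ⟨α, β, hαβ, hp1α, hβp2⟩ :
          ∃ α β : Fin N, ((α : ℕ) + 1 = β ∨ (β : ℕ) + 1 = α) ∧ r p1 α ∧ r β p2 := by
        rcases hp with ⟨h4, h5⟩ | ⟨h4, h5⟩
        · exact ⟨a, b, Or.inl hab, h4, h5⟩
        · exact ⟨b, a, Or.inr hab, h4, h5⟩
      have hnp2 : ¬ r q1 p2 := by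
        intro h
        rcases hp with ⟨h4, h5⟩ | ⟨h4, h5⟩
        · exact hnab (Or.inl ⟨h4, r.trans' h5 (r.symm' h)⟩)
        · exact hnab (Or.inr ⟨h4, r.trans' h5 (r.symm' h)⟩)
      have hβq1 : q1 < β := by
        by_contra hc
        push_neg at hc
        rcases lt_or_eq_of_le hc with hc | hc
        · have hres : r β q1 := nc_rel hr hc h2 h3 hβp2 hq
          exact hnp2 (r.trans' (r.symm' hres) hβp2)
        · rw [hc] at hβp2; exact hnp2 hβp2
      have hβq2 : β < q2 := by
        by_contra hc
        push_neg at hc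
        rcases lt_or_eq_of_le hc with hc | hc
        · exact hnp2 (nc_rel hr h2 h3 hc hq (r.symm' hβp2))
        · rw [← hc] at hβp2; exact hnp2 (r.trans' hq hβp2)
      have hαne1 : α ≠ q1 := by rintro rfl; exact hn' hp1α
      have hαne2 : α ≠ q2 := by
        rintro rfl; exact hn' (r.trans' hp1α (r.symm' hq))
      have hαq1 : q1 < α := by
        rw [Fin.lt_def] at *
        have := Fin.ext_iff.not.mp hαne1
        omega
      have hαq2 : α < q2 := by
        rw [Fin.lt_def] at *
        have := Fin.ext_iff.not.mp hαne2
        omega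
      exact hn' (nc_rel hr h1 hαq1 hαq2 hp1α hq)
    · rcases hp with ⟨h4, _⟩ | ⟨h4, _⟩ <;> rcases hq with ⟨h6, _⟩ | ⟨h6, _⟩
      · exact hn' (r.trans' h4 (r.symm' h6))
      · exact hnab (Or.inl ⟨h4, r.symm' h6⟩)
      · exact hnab (Or.inr ⟨h4, r.symm' h6⟩)
      · exact hn' (r.trans' h4 (r.symm' h6))

/-- Partial version of `mSetoid`: only the first `j` pairs are merged. -/
def mPartial (k j : ℕ) : Setoid (Fin (2 * k)) :=
  Setoid.ker (fun i => if i.val < 2 * j then i.val / 2 else i.val + 2 * k)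

lemma mPartial_rel (k j : ℕ) (x y : Fin (2 * k)) :
    mPartial k j x y ↔
      x = y ∨ (x.val < 2 * j ∧ y.val < 2 * j ∧ x.val / 2 = y.val / 2) := by
  have hx := x.isLt
  have hy := y.isLt
  rw [mPartial, Setoid.ker_def, Fin.ext_iff]
  split_ifs <;> omega

lemma mPartial_zero (k : ℕ) (p : Setoid (Fin (2 * k))) : p ⊔ mPartial k 0 = p := by
  rw [sup_eq_left]
  intro x y h
  rcases (mPartial_rel k 0 x y).mp h with rfl | ⟨h1, _, _⟩
  · exact p.refl' x
  · omega

lemma mPartial_succ (k j : ℕ) (hj : j < k) :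
    mPartial k (j + 1) =
      mPartial k j ⊔ pairSetoid (⟨2 * j, by omega⟩ : Fin (2 * k)) ⟨2 * j + 1, by omega⟩ := by
  apply le_antisymm
  · intro x y h
    rcases (mPartial_rel k (j + 1) x y).mp h with rfl | ⟨h1, h2, h3⟩
    · exact Setoid.refl' _ x
    · rcases Nat.lt_or_ge x.val (2 * j) with hx | hx
      · exact Setoid.le_def.mp le_sup_left ((mPartial_rel k j x y).mpr (Or.inr ⟨hx, by omega, h3⟩))
      · have hx' : x.val = 2 * j ∨ x.val = 2 * j + 1 := by omega
        have hy' : y.val = 2 * j ∨ y.val = 2 * j + 1 := by omega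
        refine Setoid.le_def.mp le_sup_right (show pairSetoid _ _ x y from ?_)
        rcases hx' with hx' | hx' <;> rcases hy' with hy' | hy'
        · exact Or.inl (Fin.ext (by omega))
        · exact Or.inr (Or.inl ⟨Fin.ext hx', Fin.ext hy'⟩)
        · exact Or.inr (Or.inr ⟨Fin.ext hx', Fin.ext hy'⟩)
        · exact Or.inl (Fin.ext (by omega))
  · apply sup_le
    · intro x y h
      rcases (mPartial_rel k j x y).mp h with rfl | ⟨h1, h2, h3⟩
      · exact Setoid.refl' _ x
      · exact (mPartial_rel k (j + 1) x y).mpr (Or.inr ⟨by omega, by omega, h3⟩)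
    · intro x y h
      rcases (pairSetoid_rel _ _ x y).mp h with rfl | ⟨rfl, rfl⟩ | ⟨rfl, rfl⟩
      · exact Setoid.refl' _ x
      · refine (mPartial_rel k (j + 1) _ _).mpr (Or.inr ?_)
        simp only [Fin.val_mk]
        omega
      · refine (mPartial_rel k (j + 1) _ _).mpr (Or.inr ?_)
        simp only [Fin.val_mk]
        omega

lemma mPartial_last (k : ℕ) : mPartial k k = mSetoid k := by
  ext x y
  rw [mPartial_rel, mSetoid, Setoid.ker_def]
  have hx := x.isLt
  have hy := y.isLt
  constructor
  · rintro (rfl | ⟨_, _, h⟩)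
    · rfl
    · exact h
  · intro h
    exact Or.inr ⟨hx, hy, h⟩

/-- If `p ∨ m` is crossing, then `p` is crossing. -/
theorem crossing_of_join_m_crossing (k : ℕ) (p : Setoid (Fin (2 * k)))
    (h : ¬ IsNoncrossing (p ⊔ mSetoid k)) : ¬ IsNoncrossing p := by
  intro hp
  apply h
  have key : ∀ j, j ≤ k → IsNoncrossing (p ⊔ mPartial k j) := by
    intro j
    induction j with
    | zero => intro _; rw [mPartial_zero]; exact hp
    | succ j ih =>
      intro hj
      rw [mPartial_succ k j (by omega), ← sup_assoc]
      exact merge_nc (ih (by omega)) rfl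
  have := key k le_rfl
  rwa [mPartial_last] at this
end

section
/- Let p be a noncrossing pair partition of Z/(2r) (r ≥ 1) such that p joined with the pair partition {{1,2},{3,4},...,{2r-1,2r}} has a single block. Then p is uniquely determined: p = {{1,2r},{2,3},{4,5},...,{2r-2,2r-1}}. -/
lemma even_card_of_invol {α : Type*} [DecidableEq α] (s : Finset α) (f : α → α)
    (hmem : ∀ x ∈ s, f x ∈ s) (hinv : ∀ x ∈ s, f (f x) = x)
    (hne : ∀ x ∈ s, f x ≠ x) : Even s.card := by
  induction s using Finset.strongInduction with
  | _ s ih =>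
    rcases s.eq_empty_or_nonempty with rfl | ⟨x, hx⟩
    · simp
    · have hfx : f x ∈ s := hmem x hx
      have hxne : f x ≠ x := hne x hx
      set t := (s.erase x).erase (f x) with ht
      have htmem : ∀ y, y ∈ t ↔ y ∈ s ∧ y ≠ x ∧ y ≠ f x := by
        intro y
        simp only [ht, Finset.mem_erase]
        tauto
      have htsub : t ⊂ s := by
        constructor
        · intro y hy; exact ((htmem y).mp hy).1
        · intro hsub
          have := (htmem x).mp (hsub hx)
          exact this.2.1 rfl
      have hcard : s.card = t.card + 2 := by
        have h1 : f x ∈ s.erase x := Finset.mem_erase.mpr ⟨hxne, hfx⟩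
        rw [ht, Finset.card_erase_of_mem h1, Finset.card_erase_of_mem hx]
        have : 1 ≤ s.card := Finset.card_pos.mpr ⟨x, hx⟩
        have : 2 ≤ s.card := Finset.one_lt_card.mpr ⟨x, hx, f x, hfx, Ne.symm hxne⟩
        omega
      have hev : Even t.card := by
        apply ih t htsub
        · intro y hy
          obtain ⟨hys, hyx, hyfx⟩ := (htmem y).mp hy
          refine (htmem (f y)).mpr ⟨hmem y hys, ?_, ?_⟩
          · intro hfyx
            apply hyfx
            rw [← hfyx, hinv y hys]
          · intro hfyfx
            apply hyx
            have := congrArg f hfyfx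
            rwa [hinv y hys, hinv x hx] at this
        · intro y hy; exact hinv y ((htmem y).mp hy).1
        · intro y hy; exact hne y ((htmem y).mp hy).1
      rw [hcard]; exact hev.add (by norm_num)


/-- If `p` is a noncrossing pair partition of `{1,…,2r}` such that `p ∨ m` has a single
block, then `p = {{1,2r},{2,3},{4,5},…,{2r-2,2r-1}}` (which is exactly `nSetoid r`). -/
theorem unique_nc_pair_partition_join_m_one_block (r : ℕ) (hr : 1 ≤ r)
    (p : Setoid (Fin (2 * r))) (hpair : IsPairPartition p) (hnc : IsNoncrossing p)
    (h : (p ⊔ mSetoid r).classes.ncard = 1) : p = nSetoid r := by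
  classical
  have hN2 : 2 ≤ 2 * r := by omega
  haveI : NeZero (2 * r) := ⟨by omega⟩
  -- the join relates everything
  have hjoin : ∀ x y : Fin (2 * r), (p ⊔ mSetoid r) x y := by
    obtain ⟨c, hc⟩ := Set.ncard_eq_one.mp h
    intro x y
    have hx : {z | (p ⊔ mSetoid r) z x} ∈ (p ⊔ mSetoid r).classes :=
      Setoid.mem_classes _ x
    have hy : {z | (p ⊔ mSetoid r) z y} ∈ (p ⊔ mSetoid r).classes :=
      Setoid.mem_classes _ y
    rw [hc, Set.mem_singleton_iff] at hx hy
    have hxy : x ∈ {z | (p ⊔ mSetoid r) z y} := by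
      rw [hy, ← hx]; exact Set.mem_setOf.mpr (Setoid.refl' _ x)
    exact hxy
  -- saturation: a nonempty set closed under p and m is everything
  have hsat : ∀ S : Set (Fin (2 * r)), S.Nonempty →
      (∀ x y, p.r x y → x ∈ S → y ∈ S) →
      (∀ x y : Fin (2 * r), x.val / 2 = y.val / 2 → x ∈ S → y ∈ S) →
      ∀ z, z ∈ S := by
    intro S hSne hp hm
    obtain ⟨x0, hx0⟩ := hSne
    set q : Setoid (Fin (2 * r)) :=
      ⟨fun u v => u ∈ S ↔ v ∈ S, ⟨fun _ => Iff.rfl, Iff.symm, Iff.trans⟩⟩ with hqdef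
    have hpq : p ≤ q := by
      rw [Setoid.le_def]
      intro u v huv
      exact ⟨fun h' => hp u v huv h', fun h' => hp v u (p.symm huv) h'⟩
    have hmq : mSetoid r ≤ q := by
      rw [Setoid.le_def]
      intro u v huv
      have huv' : u.val / 2 = v.val / 2 := huv
      exact ⟨fun h' => hm u v huv' h', fun h' => hm v u huv'.symm h'⟩
    intro z
    have := Setoid.le_def.mp (sup_le hpq hmq) (hjoin x0 z)
    exact this.mp hx0
  -- partner function
  have hclass : ∀ a : Fin (2 * r), ∃ b, b ≠ a ∧ p.r b a ∧
      ∀ c, p.r c a → c = a ∨ c = b := by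
    intro a
    have h2 := hpair _ (p.mem_classes a)
    obtain ⟨u, v, huv, hset⟩ := Set.ncard_eq_two.mp h2
    have ha : a ∈ {x | p.r x a} := p.refl' a
    rw [hset] at ha
    rcases ha with ha | ha
    · refine ⟨v, by rw [ha]; exact huv.symm, ?_, ?_⟩
      · have : v ∈ {x | p.r x a} := by rw [hset]; right; rfl
        exact this
      · intro c hc
        have : c ∈ ({u, v} : Set _) := by rw [← hset]; exact hc
        rcases this with hcu | hcv
        · left; rw [hcu, ← ha]
        · right; exact hcv
    · have ha' : a = v := ha
      refine ⟨u, by rw [ha']; exact huv, ?_, ?_⟩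
      · have : u ∈ {x | p.r x a} := by rw [hset]; left; rfl
        exact this
      · intro c hc
        have : c ∈ ({u, v} : Set _) := by rw [← hset]; exact hc
        rcases this with hcu | hcv
        · right; exact hcu
        · left; rw [Set.mem_singleton_iff] at hcv; rw [hcv, ← ha']
  choose f hf_ne hf_rel hf_uniq using hclass
  have hfr : ∀ a, p.r a (f a) := fun a => p.symm (hf_rel a)
  have hff : ∀ a, f (f a) = a := by
    intro a
    rcases hf_uniq a (f (f a)) (p.trans' (hf_rel (f a)) (hf_rel a)) with h1 | h1
    · exact h1
    · exact absurd h1 (hf_ne (f a))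
  have huniq' : ∀ a c, p.r a c → c = a ∨ c = f a := fun a c hac => hf_uniq a c (p.symm' hac)
  -- interior of a pair is stable
  have hstab : ∀ u x y : Fin (2 * r), u < x → x < f u → p.r x y → u < y ∧ y < f u := by
    intro u x y hux hxv hxy
    have huv : p.r u (f u) := hfr u
    have hnux : ¬ p.r u x := by
      intro h'
      rcases huniq' u x h' with h1 | h1
      · rw [h1] at hux; exact lt_irrefl _ hux
      · rw [h1] at hxv; exact lt_irrefl _ hxv
    rcases lt_trichotomy y u with hyu | hyu | hyu
    · exfalso
      apply hnc
      refine ⟨y, u, x, f u, hyu, hux, hxv, p.symm' hxy, huv, ?_⟩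
      intro hyu'
      rcases huniq' u y (p.symm' hyu') with h1 | h1
      · rw [h1] at hyu; exact lt_irrefl _ hyu
      · rw [h1] at hyu; exact absurd (hyu.trans (hux.trans hxv)) (lt_irrefl _)
    · exact absurd (p.symm' (hyu ▸ hxy)) hnux
    · rcases lt_trichotomy y (f u) with hyv | hyv | hyv
      · exact ⟨hyu, hyv⟩
      · exfalso
        exact hnux (p.trans' huv (p.symm' (hyv ▸ hxy)))
      · exfalso
        exact hnc ⟨u, x, f u, y, hux, hxv, hyv, huv, hxy, hnux⟩
  -- parity of pair gaps
  have hparity : ∀ u : Fin (2 * r), u < f u → Even ((f u).val - u.val - 1) := by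
    intro u huv
    have hev := even_card_of_invol (Finset.Ioo u (f u)) f ?_ ?_ ?_
    · rwa [Fin.card_Ioo] at hev
    · intro x hx
      rw [Finset.mem_Ioo] at hx ⊢
      exact hstab u x (f x) hx.1 hx.2 (hfr x)
    · intro x _; exact hff x
    · intro x _; exact hf_ne x
  have h1v : (1 : Fin (2 * r)).val = 1 := by
    rw [Fin.val_one']; exact Nat.mod_eq_of_lt hN2
  have hvadd : ∀ a : Fin (2 * r), (a + 1).val = (a.val + 1) % (2 * r) := by
    intro a; rw [Fin.val_add, h1v]
  -- the key step: every odd point is paired with its successor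
  have key : ∀ a : Fin (2 * r), a.val % 2 = 1 → f a = a + 1 := by
    intro a ha
    have hab : p.r a (f a) := hfr a
    have hba : f a ≠ a := hf_ne a
    rcases lt_trichotomy a (f a) with hlt | heq | hgt
    · by_cases hb1 : (f a).val = a.val + 1
      · apply Fin.ext
        rw [hvadd]
        have hlt2 : a.val + 1 < 2 * r := by rw [← hb1]; exact (f a).isLt
        rw [Nat.mod_eq_of_lt hlt2, hb1]
      · exfalso
        obtain ⟨k, hk⟩ := hparity a hlt
        have hlt' : a.val < (f a).val := hlt
        set S : Set (Fin (2 * r)) := {x | a.val < x.val ∧ x.val < (f a).val} with hS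
        have hallS := hsat S ⟨⟨a.val + 1, by omega⟩, by
            constructor
            · exact Nat.lt_succ_self _
            · show a.val + 1 < (f a).val; omega⟩ ?_ ?_
        · have := hallS a
          rw [hS] at this
          exact absurd this.1 (lt_irrefl _)
        · intro x y hxy hxS
          exact hstab a x y hxS.1 hxS.2 hxy
        · intro x y hdiv hxS
          have hx1 : a.val < x.val := hxS.1
          have hx2 : x.val < (f a).val := hxS.2
          constructor
          · show a.val < y.val; omega
          · show y.val < (f a).val; omega
    · exact absurd heq.symm hba
    · have hfb : f (f a) = a := hff a
      have hev : Even (a.val - (f a).val - 1) := by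
        have := hparity (f a) (by rw [hfb]; exact hgt)
        rwa [hfb] at this
      obtain ⟨k, hk⟩ := hev
      have hgt' : (f a).val < a.val := hgt
      set U : Set (Fin (2 * r)) := {x | (f a).val ≤ x.val ∧ x.val ≤ a.val} with hU
      have hallU := hsat U ⟨a, ⟨le_of_lt hgt', le_refl _⟩⟩ ?_ ?_
      · have h0 := hallU ⟨0, by omega⟩
        have hl := hallU ⟨2 * r - 1, by omega⟩
        rw [hU] at h0 hl
        have hb0 : (f a).val = 0 := Nat.le_zero.mp h0.1
        have hal : a.val = 2 * r - 1 := by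
          have h2 : 2 * r - 1 ≤ a.val := hl.2
          have h3 : a.val < 2 * r := a.isLt
          omega
        apply Fin.ext
        rw [hvadd, hb0, show a.val + 1 = 2 * r from by omega, Nat.mod_self]
      · intro x y hxy hxU
        rcases eq_or_lt_of_le hxU.1 with hxb | hxb
        · have hxb' : x = f a := Fin.ext hxb.symm
          rcases huniq' (f a) y (hxb' ▸ hxy) with h1 | h1
          · rw [h1]; exact ⟨le_refl _, le_of_lt hgt'⟩
          · rw [h1, hfb]; exact ⟨le_of_lt hgt', le_refl _⟩
        · rcases eq_or_lt_of_le hxU.2 with hxa | hxa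
          · have hxa' : x = a := Fin.ext hxa
            rcases huniq' a y (hxa' ▸ hxy) with h1 | h1
            · rw [h1]; exact ⟨le_of_lt hgt', le_refl _⟩
            · rw [h1]; exact ⟨le_refl _, le_of_lt hgt'⟩
          · have := hstab (f a) x y hxb (by rw [hfb]; exact hxa) hxy
            rw [hfb] at this
            exact ⟨le_of_lt this.1, le_of_lt this.2⟩
      · intro x y hdiv hxU
        have hx1 : (f a).val ≤ x.val := hxU.1
        have hx2 : x.val ≤ a.val := hxU.2
        constructor
        · show (f a).val ≤ y.val; omega
        · show y.val ≤ a.val; omega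
  have hkey' : ∀ a : Fin (2 * r), a.val % 2 = 1 → p.r a (a + 1) := by
    intro a ha
    have hpa := hfr a
    rwa [key a ha] at hpa
  have hg : ∀ z : Fin (2 * r), z.val % 2 = 1 →
      ((z.val + 1) / 2) % r = (((z + 1).val + 1) / 2) % r := by
    intro z hz
    by_cases hzl : z.val = 2 * r - 1
    · have hz1 : z.val + 1 = 2 * r := by have := z.isLt; omega
      have hz0 : (z + 1).val = 0 := by
        rw [hvadd, hz1, Nat.mod_self]
      rw [hz0, hz1, Nat.mul_div_cancel_left r (by norm_num : 0 < 2), Nat.mod_self]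
      norm_num
    · have hlt : z.val + 1 < 2 * r := by have := z.isLt; omega
      rw [hvadd, Nat.mod_eq_of_lt hlt,
        show (z.val + 1) / 2 = (z.val + 1 + 1) / 2 from by omega]
  have heven : ∀ x : Fin (2 * r), x.val % 2 = 0 →
      ∃ z : Fin (2 * r), z.val % 2 = 1 ∧ z + 1 = x := by
    intro x hx
    by_cases hx0 : x.val = 0
    · refine ⟨⟨2 * r - 1, by omega⟩, by show (2 * r - 1) % 2 = 1; omega, ?_⟩
      apply Fin.ext
      rw [hvadd]
      show (2 * r - 1 + 1) % (2 * r) = x.val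
      rw [show 2 * r - 1 + 1 = 2 * r from by omega, Nat.mod_self, hx0]
    · refine ⟨⟨x.val - 1, by have := x.isLt; omega⟩,
        by show (x.val - 1) % 2 = 1; omega, ?_⟩
      apply Fin.ext
      rw [hvadd]
      show (x.val - 1 + 1) % (2 * r) = x.val
      rw [show x.val - 1 + 1 = x.val from by omega, Nat.mod_eq_of_lt x.isLt]
  apply Setoid.ext
  intro x y
  constructor
  · intro hxy
    show ((x.val + 1) / 2) % r = ((y.val + 1) / 2) % r
    rcases huniq' x y hxy with h1 | h1
    · rw [h1]
    · subst h1
      rcases Nat.mod_two_eq_zero_or_one x.val with hx | hx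
      · obtain ⟨z, hz, hzx⟩ := heven x hx
        have hfzx : f z = x := by rw [key z hz, hzx]
        have hfx : f x = z := by rw [← hfzx, hff]
        rw [hfx, ← hzx]
        exact (hg z hz).symm
      · rw [key x hx]
        exact hg x hx
  · intro hxy
    have hxy' : ((x.val + 1) / 2) % r = ((y.val + 1) / 2) % r := hxy
    by_cases hxeq : x = y
    · rw [hxeq]
    · have hne : x.val ≠ y.val := fun hv => hxeq (Fin.ext hv)
      have hgval : ∀ z : Fin (2 * r), z.val ≠ 2 * r - 1 →
          ((z.val + 1) / 2) % r = (z.val + 1) / 2 := by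
        intro z hzl
        apply Nat.mod_eq_of_lt
        have := z.isLt
        omega
      by_cases hxl : x.val = 2 * r - 1
      · by_cases hyl : y.val = 2 * r - 1
        · exact absurd (hxl.trans hyl.symm) hne
        · have hgx : ((x.val + 1) / 2) % r = 0 := by
            rw [show x.val + 1 = 2 * r from by have := x.isLt; omega,
              Nat.mul_div_cancel_left r (by norm_num : 0 < 2), Nat.mod_self]
          rw [hgx, hgval y hyl] at hxy'
          have hy0 : y.val = 0 := by omega
          have hxodd : x.val % 2 = 1 := by omega
          have hpx := hkey' x hxodd
          have hx1 : x + 1 = y := by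
            apply Fin.ext
            rw [hvadd, show x.val + 1 = 2 * r from by have := x.isLt; omega,
              Nat.mod_self, hy0]
          rwa [hx1] at hpx
      · by_cases hyl : y.val = 2 * r - 1
        · have hgy : ((y.val + 1) / 2) % r = 0 := by
            rw [show y.val + 1 = 2 * r from by have := y.isLt; omega,
              Nat.mul_div_cancel_left r (by norm_num : 0 < 2), Nat.mod_self]
          rw [hgy, hgval x hxl] at hxy'
          have hx0 : x.val = 0 := by omega
          have hyodd : y.val % 2 = 1 := by omega
          have hpy := hkey' y hyodd
          have hy1 : y + 1 = x := by
            apply Fin.ext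
            rw [hvadd, show y.val + 1 = 2 * r from by have := y.isLt; omega,
              Nat.mod_self, hx0]
          rw [hy1] at hpy
          exact p.symm' hpy
        · rw [hgval x hxl, hgval y hyl] at hxy'
          rcases (by omega : x.val % 2 = 1 ∧ y.val = x.val + 1 ∨
              y.val % 2 = 1 ∧ x.val = y.val + 1) with ⟨hodd, hsucc⟩ | ⟨hodd, hsucc⟩
          · have hx1 : x + 1 = y := by
              apply Fin.ext
              rw [hvadd, Nat.mod_eq_of_lt (by have := y.isLt; omega)]
              omega
            have hpx := hkey' x hodd
            rwa [hx1] at hpx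
          · have hy1 : y + 1 = x := by
              apply Fin.ext
              rw [hvadd, Nat.mod_eq_of_lt (by have := x.isLt; omega)]
              omega
            have hpy := hkey' y hodd
            rw [hy1] at hpy
            exact p.symm' hpy
end

section
/- For every l ≥ 1, 2·∑_{j=0}^{l−1} [ C(l−1,j)² − C(l−1,j−1)·C(l−1,j+1) ] κ^{j+1} (1−κ)^{l−j} = (2/l)·∑_{j=1}^{l} C(l,j)·C(l,j−1)·κ^{j}(1−κ)^{l+1−j}, as an identity of polynomials in κ. -/
open Finset

lemma key_nar (l j : ℕ) (hl : 1 ≤ l) (hj : j < l) :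
    (l : ℝ) * (((l - 1).choose j : ℝ) ^ 2 -
        (if j = 0 then 0 else ((l - 1).choose (j - 1) : ℝ)) * ((l - 1).choose (j + 1) : ℝ))
      = (l.choose (j + 1) : ℝ) * (l.choose j : ℝ) := by
  obtain ⟨m, rfl⟩ : ∃ m, l = m + 1 := ⟨l - 1, (Nat.succ_pred_eq_of_pos hl).symm⟩
  simp only [Nat.add_sub_cancel]
  have hjm : j ≤ m := Nat.lt_succ_iff.mp hj
  rcases Nat.eq_zero_or_pos j with rfl | hj1
  · simp [Nat.choose_one_right]
  · obtain ⟨i, rfl⟩ : ∃ i, j = i + 1 := ⟨j - 1, (Nat.succ_pred_eq_of_pos hj1).symm⟩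
    have him : i + 1 ≤ m := hjm
    have him' : i ≤ m := le_trans (Nat.le_succ i) him
    have h1 : ((m:ℝ)+1) * (m.choose (i+1) : ℝ) = ((m+1).choose (i+2) : ℝ) * ((i:ℝ)+2) := by
      have := congrArg (fun n : ℕ => (n:ℝ)) (Nat.add_one_mul_choose_eq m (i+1))
      push_cast at this; linarith
    have h3 : (m.choose (i+1) : ℝ) * ((i:ℝ)+1) = (m.choose i : ℝ) * ((m:ℝ) - i) := by
      have := congrArg (fun n : ℕ => (n:ℝ)) (Nat.choose_succ_right_eq m i)
      push_cast [Nat.cast_sub him'] at this; linarith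
    have h4 : (m.choose (i+2) : ℝ) * ((i:ℝ)+2) = (m.choose (i+1) : ℝ) * ((m:ℝ) - i - 1) := by
      have := congrArg (fun n : ℕ => (n:ℝ)) (Nat.choose_succ_right_eq m (i+1))
      push_cast [Nat.cast_sub him] at this; linarith
    have hq : ((m+1).choose (i+1) : ℝ) = (m.choose i : ℝ) + (m.choose (i+1) : ℝ) := by
      rw [Nat.choose_succ_succ]; push_cast; ring
    simp only [Nat.add_sub_cancel, if_neg (Nat.succ_ne_zero i)]
    set a : ℝ := (m.choose (i+1) : ℝ) with ha
    set b : ℝ := (m.choose i : ℝ) with hb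
    set c : ℝ := (m.choose (i+2) : ℝ) with hc
    set p : ℝ := ((m+1).choose (i+2) : ℝ) with hp
    rw [show (i+1+1) = i+2 from rfl] at *
    rw [hq]
    have hne : ((i:ℝ)+2) * ((m:ℝ) - i) ≠ 0 := by
      have : (i:ℝ) + 1 ≤ (m:ℝ) := by exact_mod_cast him
      have h2 : (0:ℝ) < (m:ℝ) - i := by linarith
      positivity
    apply mul_right_cancel₀ hne
    push_cast
    linear_combination
      (((m:ℝ)+1)*a*((m:ℝ)-i-1) + ((m:ℝ)+1)*a + ((m:ℝ)+1)*(c*((i:ℝ)+2) - a*((m:ℝ)-i-1))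
        - (((m:ℝ)+1)*a - p*((i:ℝ)+2))) * h3
      + (-(((m:ℝ)+1)*a*((i:ℝ)+1))) * h4
      + (a*((m:ℝ)+1)) * h1

/-- The binomial identity
`2·∑_{j=0}^{l-1} [C(l-1,j)² - C(l-1,j-1)·C(l-1,j+1)] κ^{j+1}(1-κ)^{l-j}
  = (2/l)·∑_{j=1}^{l} C(l,j)·C(l,j-1)·κ^j (1-κ)^{l+1-j}` for all real `κ`
(with the convention `C(a,-1) = 0`). -/
theorem narayana_binomial_identity (l : ℕ) (hl : 1 ≤ l) (κ : ℝ) :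
    2 * ∑ j ∈ Finset.range l,
        (((l - 1).choose j : ℝ) ^ 2 -
            (if j = 0 then 0 else ((l - 1).choose (j - 1) : ℝ)) * ((l - 1).choose (j + 1) : ℝ))
          * κ ^ (j + 1) * (1 - κ) ^ (l - j)
      = (2 / (l : ℝ)) * ∑ j ∈ Finset.Icc 1 l,
          (l.choose j : ℝ) * (l.choose (j - 1) : ℝ) * κ ^ j * (1 - κ) ^ (l + 1 - j) := by
  have hl0 : (l : ℝ) ≠ 0 := Nat.cast_ne_zero.mpr (by omega)
  rw [← Finset.Ico_add_one_right_eq_Icc, Finset.sum_Ico_eq_sum_range]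
  simp only [Nat.add_sub_cancel, Nat.succ_sub_one]
  rw [Finset.mul_sum, Finset.mul_sum]
  refine Finset.sum_congr rfl fun j hj => ?_
  have hjl : j < l := Finset.mem_range.mp hj
  have h1 : (1 + j) - 1 = j := by omega
  have h2 : l + 1 - (1 + j) = l - j := by omega
  rw [h1, h2]
  have key := key_nar l j hl hjl
  have : ((l.choose (1 + j) : ℝ)) * (l.choose j : ℝ)
      = (l : ℝ) * (((l - 1).choose j : ℝ) ^ 2 -
        (if j = 0 then 0 else ((l - 1).choose (j - 1) : ℝ)) * ((l - 1).choose (j + 1) : ℝ)) := by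
    rw [Nat.add_comm 1 j]; linarith
  rw [show κ ^ (1 + j) = κ ^ (j + 1) by rw [Nat.add_comm], ]
  set A : ℝ := (((l - 1).choose j : ℝ) ^ 2 -
        (if j = 0 then 0 else ((l - 1).choose (j - 1) : ℝ)) * ((l - 1).choose (j + 1) : ℝ)) with hA
  rw [this]
  field_simp
end

section
/- For 0 < κ < 1 and integer l ≥ 1, the l-th moment of the measure μ with density (1/(πx))·√((x−a)(b−x)) on [a,b], where a = 1 − 2√(κ(1−κ)) and b = 1 + 2√(κ(1−κ)), plus mass |1−2κ| at 0, equals 2·∑_{j=1}^{l} N(l,j)·κ^j·(1−κ)^{l+1−j}, where N(l,j) = (1/l)C(l,j)C(l,j−1) is the Narayana number. -/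
open MeasureTheory

/-- The measure `μ_{ch,2} = |1-2κ|·δ₀ + 1_{[a,b]}(x)·(1/(πx))√((x-a)(b-x)) dx`, where
`a = 1 - 2√(κ(1-κ))`, `b = 1 + 2√(κ(1-κ))`. -/
noncomputable def muCh2 (κ : ℝ) : Measure ℝ :=
  ENNReal.ofReal |1 - 2 * κ| • Measure.dirac 0 +
    volume.withDensity (fun x =>
      ENNReal.ofReal (Set.indicator
        (Set.Icc (1 - 2 * Real.sqrt (κ * (1 - κ))) (1 + 2 * Real.sqrt (κ * (1 - κ))))
        (fun y => (1 / (Real.pi * y)) *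
          Real.sqrt ((y - (1 - 2 * Real.sqrt (κ * (1 - κ)))) *
            ((1 + 2 * Real.sqrt (κ * (1 - κ))) - y))) x))

open MeasureTheory Real intervalIntegral Set Finset

lemma S_rec (n : ℕ) : (∫ x in (0:ℝ)..π, Real.cos x ^ (n+2))
    = (n+1)/(n+2) * ∫ x in (0:ℝ)..π, Real.cos x ^ n := by
  rw [integral_cos_pow]; simp

lemma S_even (m : ℕ) : (∫ x in (0:ℝ)..π, Real.cos x ^ (2*m))
    = π * (Nat.centralBinom m) / 4 ^ m := by
  induction m with
  | zero => simp
  | succ k ih =>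
    have h2 : 2*(k+1) = 2*k + 2 := by ring
    rw [h2, S_rec, ih]
    have hb' : ((k:ℝ)+1) * (Nat.centralBinom (k+1)) = 2*(2*k+1) * Nat.centralBinom k := by
      exact_mod_cast congrArg (Nat.cast : ℕ → ℝ) (Nat.succ_mul_centralBinom_succ k)
    push_cast
    field_simp
    linear_combination (-(2*(4:ℝ)^k)) * hb'

lemma S_odd (m : ℕ) : (∫ x in (0:ℝ)..π, Real.cos x ^ (2*m+1)) = 0 := by
  induction m with
  | zero => simp
  | succ k ih =>
    have h2 : 2*(k+1)+1 = (2*k+1) + 2 := by ring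
    rw [h2, S_rec, ih, mul_zero]

lemma W_even (m : ℕ) : (∫ x in (0:ℝ)..π, Real.cos x ^ (2*m) * Real.sin x ^ 2)
    = π * (catalan m) / (2 * 4 ^ m) := by
  have h : ∀ x : ℝ, Real.cos x ^ (2*m) * Real.sin x ^ 2
      = Real.cos x ^ (2*m) - Real.cos x ^ (2*m+2) := fun x => by
    linear_combination (Real.cos x ^ (2*m)) * (Real.sin_sq_add_cos_sq x)
  simp_rw [h]
  rw [intervalIntegral.integral_sub (by apply Continuous.intervalIntegrable; fun_prop)
    (by apply Continuous.intervalIntegrable; fun_prop), S_rec, S_even]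
  have hcb : ((m:ℝ)+1) * (catalan m) = Nat.centralBinom m := by
    exact_mod_cast congrArg (Nat.cast : ℕ → ℝ) (succ_mul_catalan_eq_centralBinom m)
  push_cast
  field_simp
  linear_combination (-1) * hcb

lemma W_odd (m : ℕ) : (∫ x in (0:ℝ)..π, Real.cos x ^ (2*m+1) * Real.sin x ^ 2) = 0 := by
  have h : ∀ x : ℝ, Real.cos x ^ (2*m+1) * Real.sin x ^ 2
      = Real.cos x ^ (2*m+1) - Real.cos x ^ (2*m+1+2) := fun x => by
    linear_combination (Real.cos x ^ (2*m+1)) * (Real.sin_sq_add_cos_sq x)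
  simp_rw [h]
  rw [intervalIntegral.integral_sub (by apply Continuous.intervalIntegrable; fun_prop)
    (by apply Continuous.intervalIntegrable; fun_prop), S_rec, S_odd]
  ring



lemma sum_even_odd {M : Type*} [AddCommMonoid M] (f : ℕ → M) (n : ℕ) :
    ∑ k ∈ Finset.range (2*n), f k = ∑ m ∈ Finset.range n, (f (2*m) + f (2*m+1)) := by
  induction n with
  | zero => simp
  | succ k ih =>
    rw [Finset.sum_range_succ, ← ih, show 2*(k+1) = (2*k+1)+1 by ring,
      Finset.sum_range_succ, Finset.sum_range_succ, add_assoc]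

lemma trig_moment (r : ℝ) (n : ℕ) :
    (∫ θ in (0:ℝ)..π, (1-r*Real.cos θ)^n * (r^2 * Real.sin θ^2))
      = ∑ m ∈ Finset.range (n+1),
          (n.choose (2*m) : ℝ) * (catalan m) * r^(2*m) * r^2 * π / (2*4^m) := by
  have hexp : ∀ θ : ℝ, (1-r*Real.cos θ)^n * (r^2 * Real.sin θ^2)
      = ∑ k ∈ Finset.range (n+1),
          (n.choose k : ℝ) * (-r)^k * r^2 * (Real.cos θ^k * Real.sin θ^2) := by
    intro θ
    rw [sub_eq_add_neg, add_comm, add_pow, Finset.sum_mul]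
    refine Finset.sum_congr rfl fun k hk => ?_
    rw [neg_mul_eq_neg_mul, mul_pow]
    ring
  simp_rw [hexp]
  rw [intervalIntegral.integral_finset_sum
    (μ := volume) (a := (0:ℝ)) (b := π) (s := Finset.range (n+1))
    (f := fun k θ => (n.choose k : ℝ) * (-r)^k * r^2 * (Real.cos θ^k * Real.sin θ^2))
    (fun k _ => by apply Continuous.intervalIntegrable; fun_prop)]
  simp_rw [intervalIntegral.integral_const_mul]
  -- now sum over k of c_k * W_k ; extend to range (2*(n+1)) then even/odd split
  have hext : (∑ k ∈ Finset.range (n+1), (n.choose k : ℝ) * (-r)^k * r^2 *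
        (∫ θ in (0:ℝ)..π, Real.cos θ^k * Real.sin θ^2))
      = ∑ k ∈ Finset.range (2*(n+1)), (n.choose k : ℝ) * (-r)^k * r^2 *
        (∫ θ in (0:ℝ)..π, Real.cos θ^k * Real.sin θ^2) := by
    refine Finset.sum_subset (Finset.range_subset_range.2 (by omega)) fun k hk hk' => ?_
    simp only [Finset.mem_range, not_lt] at hk'
    rw [Nat.choose_eq_zero_of_lt (by omega)]
    simp
  rw [hext]
  rw [sum_even_odd (fun k => (n.choose k : ℝ) * (-r)^k * r^2 *
      (∫ θ in (0:ℝ)..π, Real.cos θ^k * Real.sin θ^2)) (n+1)]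
  refine Finset.sum_congr rfl fun m hm => ?_
  rw [W_even, W_odd]
  rw [show ((-r):ℝ)^(2*m) = r^(2*m) by rw [pow_mul, pow_mul, neg_sq]]
  ring


lemma subst_lemma (r : ℝ) (hr : 0 ≤ r) (n : ℕ) :
    (∫ x in (1-r)..(1+r), x^n * Real.sqrt ((x-(1-r))*((1+r)-x)))
      = ∫ θ in (0:ℝ)..π, (1-r*Real.cos θ)^n * (r^2 * Real.sin θ^2) := by
  have hg : Continuous fun x : ℝ => x^n * Real.sqrt ((x-(1-r))*((1+r)-x)) := by fun_prop
  have h := intervalIntegral.integral_comp_smul_deriv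
    (f := fun θ : ℝ => 1 - r*Real.cos θ) (f' := fun θ : ℝ => r*Real.sin θ)
    (g := fun x : ℝ => x^n * Real.sqrt ((x-(1-r))*((1+r)-x))) (a := 0) (b := π)
    (fun θ _ => by
      simpa using ((Real.hasDerivAt_cos θ).const_mul r).const_sub 1)
    (by fun_prop) hg
  simp only [Real.cos_zero, Real.cos_pi, mul_one, mul_neg_one] at h
  rw [show (1:ℝ) - -r = 1 + r by ring] at h
  rw [← h]
  apply intervalIntegral.integral_congr
  intro θ hθ
  rw [Set.uIcc_of_le Real.pi_pos.le] at hθ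
  have hs : 0 ≤ Real.sin θ := Real.sin_nonneg_of_nonneg_of_le_pi hθ.1 hθ.2
  have key : (1 - r*Real.cos θ - (1-r)) * ((1+r) - (1 - r*Real.cos θ))
      = (r * Real.sin θ)^2 := by
    have := Real.sin_sq_add_cos_sq θ
    linear_combination (-(r^2)) * this
  simp only [smul_eq_mul, Function.comp_apply]
  rw [key, Real.sqrt_sq (by positivity)]
  ring

lemma step1 (κ : ℝ) (h0 : 0 < κ) (h1 : κ < 1) (l : ℕ) (hl : 1 ≤ l) :
    ∫ x, x ^ l ∂(muCh2 κ)
      = ∫ x in (1 - 2 * Real.sqrt (κ * (1 - κ)))..(1 + 2 * Real.sqrt (κ * (1 - κ))),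
          x ^ (l-1) * ((1/π) * Real.sqrt ((x - (1 - 2 * Real.sqrt (κ * (1 - κ)))) *
            ((1 + 2 * Real.sqrt (κ * (1 - κ))) - x))) := by
  set r : ℝ := 2 * Real.sqrt (κ * (1 - κ)) with hrdef
  have hr0 : 0 < r := by
    have : 0 < κ * (1 - κ) := mul_pos h0 (by linarith)
    positivity
  have hr1 : r ≤ 1 := by
    have hs : κ * (1 - κ) ≤ 1/4 := by nlinarith [sq_nonneg (1 - 2*κ)]
    have h14 : Real.sqrt (κ * (1 - κ)) ≤ 1/2 := by
      rw [show (1:ℝ)/2 = Real.sqrt (1/4) by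
        rw [show (1:ℝ)/4 = (1/2)^2 by norm_num, Real.sqrt_sq (by norm_num)]]
      exact Real.sqrt_le_sqrt hs
    rw [hrdef]; linarith
  have ha0 : 0 ≤ 1 - r := by linarith
  have hab : 1 - r ≤ 1 + r := by linarith
  -- the density function
  set d : ℝ → ℝ := Set.indicator (Set.Icc (1-r) (1+r))
      (fun y => (1 / (Real.pi * y)) * Real.sqrt ((y - (1-r)) * ((1+r) - y))) with hd
  have hdmeas : Measurable d := by
    apply Measurable.indicator _ measurableSet_Icc
    fun_prop
  have hdnn : ∀ x, 0 ≤ d x := by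
    intro x
    rw [hd]
    apply Set.indicator_nonneg
    intro y hy
    have hy0 : 0 ≤ y := le_trans ha0 hy.1
    have : 0 ≤ 1 / (π * y) := by positivity
    positivity
  -- the nice continuous version
  set F : ℝ → ℝ := fun x => x ^ (l-1) * ((1/π) * Real.sqrt ((x - (1-r)) * ((1+r) - x)))
    with hF
  have hFcont : Continuous F := by fun_prop
  have hkey : (fun x : ℝ => x ^ l * d x) =ᵐ[volume]
      Set.indicator (Set.Icc (1-r) (1+r)) F := by
    have h0m : (volume : Measure ℝ) {(0:ℝ)} = 0 := volume_singleton
    rw [Filter.eventuallyEq_iff_exists_mem]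
    refine ⟨{(0:ℝ)}ᶜ, by rwa [mem_ae_iff, compl_compl], fun x hx => ?_⟩
    have hx0 : x ≠ 0 := hx
    show x ^ l * d x = Set.indicator (Set.Icc (1-r) (1+r)) F x
    by_cases hmem : x ∈ Set.Icc (1-r) (1+r)
    · rw [hd, hF, Set.indicator_of_mem hmem, Set.indicator_of_mem hmem]
      have hxl : x ^ l = x ^ (l-1) * x := by
        rw [← pow_succ]; congr 1; omega
      rw [hxl]
      have hpi := Real.pi_ne_zero
      field_simp
    · rw [hd, Set.indicator_of_notMem hmem, Set.indicator_of_notMem hmem, mul_zero]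
  have hFint : Integrable (Set.indicator (Set.Icc (1-r) (1+r)) F) volume := by
    rw [integrable_indicator_iff measurableSet_Icc]
    exact (hFcont.continuousOn).integrableOn_compact isCompact_Icc
  -- unfold muCh2
  rw [show muCh2 κ = ENNReal.ofReal |1 - 2 * κ| • Measure.dirac 0 +
      volume.withDensity (fun x => ENNReal.ofReal (d x)) from rfl]
  rw [integral_add_measure]
  · rw [MeasureTheory.integral_smul_measure, integral_dirac]
    rw [show (0:ℝ) ^ l = 0 by exact zero_pow (by omega)]
    simp only [smul_zero, zero_add]
    rw [show (fun x : ℝ => ENNReal.ofReal (d x))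
        = (fun x : ℝ => ((Real.toNNReal (d x) : NNReal) : ENNReal)) from rfl]
    rw [integral_withDensity_eq_integral_smul
      (f := fun x => (d x).toNNReal) (by fun_prop) _]
    have heq : ∀ x : ℝ, (d x).toNNReal • x ^ l = x ^ l * d x := fun x => by
      simp [NNReal.smul_def, Real.coe_toNNReal _ (hdnn x), mul_comm]
    simp_rw [heq]
    rw [integral_congr_ae hkey, MeasureTheory.integral_indicator measurableSet_Icc,
      MeasureTheory.integral_Icc_eq_integral_Ioc, ← intervalIntegral.integral_of_le hab]
  · apply Integrable.smul_measure _ ENNReal.ofReal_ne_top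
    exact (integrable_const _).congr (ae_eq_dirac (fun x : ℝ => x ^ l)).symm
  · rw [integrable_withDensity_iff (by fun_prop) (by simp [ENNReal.ofReal_lt_top])]
    have : (fun x : ℝ => x ^ l * (ENNReal.ofReal (d x)).toReal)
        = fun x => x ^ l * d x := funext fun x => by
      rw [ENNReal.toReal_ofReal (hdnn x)]
    rw [this]
    exact hFint.congr hkey.symm


-- Vandermonde in convenient form
lemma vand_conv (a b q : ℕ) : (a+b).choose q = ∑ k ∈ range (q+1), a.choose k * b.choose (q-k) := by
  rw [Nat.add_choose_eq, Finset.Nat.sum_antidiagonal_eq_sum_range_succ_mk]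

lemma vand1 (n q : ℕ) (hq : q ≤ n) :
    ∑ m ∈ range (q+1), q.choose m * (n-q).choose m = n.choose q := by
  have h : n.choose q = (q + (n-q)).choose q := by congr 1; omega
  rw [h, vand_conv, ← Finset.sum_range_reflect]
  refine Finset.sum_congr rfl fun m hm => ?_
  simp only [Finset.mem_range] at hm
  have hm' : m ≤ q := by omega
  rw [show q + 1 - 1 - m = q - m by omega, Nat.choose_symm hm']

lemma term1 (n q m : ℕ) (hm : m ≤ q) (hq : q ≤ n) :
    n.choose (2*m) * (2*m).choose m * (n-2*m).choose (q-m)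
      = n.choose q * (q.choose m * (n-q).choose m) := by
  by_cases hmn : m ≤ n - q
  · have h2m : 2*m ≤ n := by omega
    have e1 : n.choose (2*m) * (2*m).choose m = n.choose m * (n-m).choose m := by
      rw [Nat.choose_mul (k := 2*m) (s := m) (by omega)]
      congr 2
      omega
    have e2 : n.choose q * q.choose m = n.choose m * (n-m).choose (q-m) := by
      rw [Nat.choose_mul hm]
    have e3 : (n-m).choose q * q.choose m = (n-m).choose m * ((n-m)-m).choose (q-m) := by
      rw [Nat.choose_mul hm]
    have e4 : (n-m).choose q * q.choose (q-m) = (n-m).choose (q-m) * ((n-m)-(q-m)).choose (q-(q-m)) := by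
      rw [Nat.choose_mul (k := q) (s := q-m) (by omega)]
    have e5 : q.choose m = q.choose (q-m) := by
      rw [Nat.choose_symm hm]
    rw [show (n-m)-m = n-2*m by omega] at e3
    rw [show (n-m)-(q-m) = n-q by omega, show q-(q-m) = m by omega] at e4
    -- combine
    calc n.choose (2*m) * (2*m).choose m * (n-2*m).choose (q-m)
        = n.choose m * ((n-m).choose m * (n-2*m).choose (q-m)) := by rw [e1]; ring
      _ = n.choose m * ((n-m).choose q * q.choose m) := by rw [← e3]
      _ = n.choose m * ((n-m).choose q * q.choose (q-m)) := by rw [← e5]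
      _ = n.choose m * ((n-m).choose (q-m) * (n-q).choose m) := by rw [e4]
      _ = (n.choose m * (n-m).choose (q-m)) * (n-q).choose m := by ring
      _ = (n.choose q * q.choose m) * (n-q).choose m := by rw [← e2]
      _ = n.choose q * (q.choose m * (n-q).choose m) := by ring
  · have h2 : (n-q).choose m = 0 := Nat.choose_eq_zero_of_lt (by omega)
    have h1 : n.choose (2*m) * (2*m).choose m * (n-2*m).choose (q-m) = 0 := by
      by_cases h2m : 2*m ≤ n
      · rw [Nat.choose_eq_zero_of_lt (show n-2*m < q-m by omega)]
        ring
      · rw [Nat.choose_eq_zero_of_lt (show n < 2*m by omega)]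
        ring
    rw [h1, h2]
    ring
  
lemma vander1 (n q : ℕ) (hq : q ≤ n) :
    ∑ m ∈ range (q+1), n.choose (2*m) * (2*m).choose m * (n-2*m).choose (q-m)
      = n.choose q * n.choose q := by
  rw [Finset.sum_congr rfl (fun m hm => term1 n q m (by simpa [Nat.lt_succ_iff] using hm) hq),
    ← Finset.mul_sum, vand1 n q hq]

lemma term2 (n q m : ℕ) (hm1 : 1 ≤ m) (hm : m ≤ q) (hq : q ≤ n) :
    n.choose (2*m) * (2*m).choose (m+1) * (n-2*m).choose (q-m)
      = n.choose (q+1) * (q+1).choose (m+1) * (n-1-q).choose (m-1) := by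
  by_cases hmn : m ≤ n - q
  · have h2m : 2*m ≤ n := by omega
    have hq1 : q + 1 ≤ n := by omega
    have e1 : n.choose (2*m) * (2*m).choose (m+1) = n.choose (m+1) * (n-(m+1)).choose (m-1) := by
      rw [Nat.choose_mul (k := 2*m) (s := m+1) (by omega)]
      congr 2
      omega
    have e2 : n.choose (q+1) * (q+1).choose (m+1)
        = n.choose (m+1) * (n-(m+1)).choose (q-m) := by
      rw [Nat.choose_mul (k := q+1) (s := m+1) (by omega)]
      congr 2
      omega
    have e3 : (n-(m+1)).choose (q-1) * (q-1).choose (m-1)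
        = (n-(m+1)).choose (m-1) * (n-2*m).choose (q-m) := by
      rw [Nat.choose_mul (k := q-1) (s := m-1) (by omega)]
      congr 2 <;> omega
    have e4 : (n-(m+1)).choose (q-1) * (q-1).choose (q-m)
        = (n-(m+1)).choose (q-m) * (n-1-q).choose (m-1) := by
      rw [Nat.choose_mul (k := q-1) (s := q-m) (by omega)]
      congr 2 <;> omega
    have e5 : (q-1).choose (m-1) = (q-1).choose (q-m) := by
      rw [show q - m = q-1-(m-1) by omega, Nat.choose_symm (show m-1 ≤ q-1 by omega)]
    calc n.choose (2*m) * (2*m).choose (m+1) * (n-2*m).choose (q-m)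
        = n.choose (m+1) * ((n-(m+1)).choose (m-1) * (n-2*m).choose (q-m)) := by
          rw [e1]; ring
      _ = n.choose (m+1) * ((n-(m+1)).choose (q-1) * (q-1).choose (m-1)) := by rw [← e3]
      _ = n.choose (m+1) * ((n-(m+1)).choose (q-1) * (q-1).choose (q-m)) := by rw [← e5]
      _ = n.choose (m+1) * ((n-(m+1)).choose (q-m) * (n-1-q).choose (m-1)) := by rw [e4]
      _ = (n.choose (m+1) * (n-(m+1)).choose (q-m)) * (n-1-q).choose (m-1) := by ring
      _ = (n.choose (q+1) * (q+1).choose (m+1)) * (n-1-q).choose (m-1) := by rw [← e2]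
  · have h1 : n.choose (2*m) * (2*m).choose (m+1) * (n-2*m).choose (q-m) = 0 := by
      by_cases h2m : 2*m ≤ n
      · rw [Nat.choose_eq_zero_of_lt (show n-2*m < q-m by omega)]
        ring
      · rw [Nat.choose_eq_zero_of_lt (show n < 2*m by omega)]
        ring
    rw [h1]
    by_cases hqn : q = n
    · rw [hqn, Nat.choose_eq_zero_of_lt (by omega)]
      ring
    · rw [Nat.choose_eq_zero_of_lt (show n-1-q < m-1 by omega)]
      ring

lemma vand2 (n q : ℕ) (hq1 : 1 ≤ q) (hq : q + 1 ≤ n) :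
    ∑ m ∈ range q, (q+1).choose (m+2) * (n-1-q).choose m = n.choose (q-1) := by
  have h : n.choose (q-1) = ((q+1) + (n-1-q)).choose (q-1) := by congr 1; omega
  rw [h, vand_conv, ← Finset.sum_range_reflect]
  rw [show q - 1 + 1 = q by omega]
  refine Finset.sum_congr rfl fun m hm => ?_
  simp only [Finset.mem_range] at hm
  rw [show q-1-m+2 = q+1-m by omega, Nat.choose_symm (show m ≤ q+1 by omega)]

lemma vander2 (n q : ℕ) (hq1 : 1 ≤ q) (hq : q ≤ n) :
    ∑ m ∈ range (q+1), n.choose (2*m) * (2*m).choose (m+1) * (n-2*m).choose (q-m)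
      = n.choose (q+1) * n.choose (q-1) := by
  rw [Finset.sum_range_succ']
  have h0 : n.choose (2*0) * (2*0).choose (0+1) * (n-2*0).choose (q-0) = 0 := by simp
  rw [h0, add_zero]
  rw [Finset.sum_congr rfl (fun m hm => by
    have hmq : m < q := Finset.mem_range.1 hm
    rw [term2 n q (m+1) (by omega) (by omega) hq,
      show m+1+1 = m+2 from rfl, show m+1-1 = m from rfl])]
  simp only [mul_assoc]
  rw [← Finset.mul_sum]
  by_cases hqn : q = n
  · subst hqn
    rw [Nat.choose_eq_zero_of_lt (by omega)]
    ring
  · rw [vand2 n q hq1 (by omega)]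

lemma catalan_real (m : ℕ) :
    (catalan m : ℝ) = ((2*m).choose m : ℝ) - ((2*m).choose (m+1) : ℝ) := by
  have hcat : ((m:ℝ)+1) * (catalan m : ℝ) = ((2*m).choose m : ℝ) := by
    have h := succ_mul_catalan_eq_centralBinom m
    have h2 : m.centralBinom = (2*m).choose m := rfl
    rw [h2] at h
    exact_mod_cast congrArg (Nat.cast : ℕ → ℝ) h
  have hcc : ((2*m).choose (m+1) : ℝ) * ((m:ℝ)+1) = ((2*m).choose m : ℝ) * m := by
    have h := Nat.choose_succ_right_eq (2*m) m
    rw [show 2*m - m = m by omega] at h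
    exact_mod_cast congrArg (Nat.cast : ℕ → ℝ) h
  have key : ((m:ℝ)+1) * (catalan m : ℝ)
      = ((m:ℝ)+1) * (((2*m).choose m : ℝ) - ((2*m).choose (m+1) : ℝ)) := by
    linear_combination hcat + hcc
  exact mul_left_cancel₀ (by positivity) key

lemma E1 (l j : ℕ) (hl : 1 ≤ l) (hj1 : 1 ≤ j) (hjl : j ≤ l) :
    ∑ m ∈ range j, ((l-1).choose (2*m) : ℝ) * (catalan m : ℝ) * ((l-1-2*m).choose (j-1-m) : ℝ)
      = (1/(l:ℝ)) * (l.choose j : ℝ) * (l.choose (j-1) : ℝ) := by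
  have hl0 : (l:ℝ) ≠ 0 := by positivity
  rcases Nat.eq_or_lt_of_le hj1 with h1 | hj2
  · -- j = 1
    subst h1
    simp [Nat.choose_one_right]
    field_simp
  · -- j ≥ 2
    have hj2' : 2 ≤ j := hj2
    set n := l - 1 with hn
    set q := j - 1 with hq
    have hqn : q ≤ n := by omega
    have hq1 : 1 ≤ q := by omega
    have hsplit : ∑ m ∈ range j, ((l-1).choose (2*m) : ℝ) * (catalan m : ℝ) *
          ((l-1-2*m).choose (j-1-m) : ℝ)
        = ((∑ m ∈ range (q+1), n.choose (2*m) * (2*m).choose m * (n-2*m).choose (q-m) : ℕ) : ℝ)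
          - ((∑ m ∈ range (q+1), n.choose (2*m) * (2*m).choose (m+1) * (n-2*m).choose (q-m) : ℕ) : ℝ) := by
      push_cast
      rw [← Finset.sum_sub_distrib, show j = q + 1 by omega]
      refine Finset.sum_congr rfl fun m hm => ?_
      rw [catalan_real, ← hn, show q + 1 - 1 - m = q - m by omega]
      push_cast
      ring
    rw [hsplit, vander1 n q hqn, vander2 n q hq1 hqn]
    -- now the pure choose identity
    have e1 : (l:ℝ) * ((l-1).choose (j-1) : ℝ) = (l.choose j : ℝ) * (j:ℝ) := by
      have h := Nat.add_one_mul_choose_eq (l-1) (j-1)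
      rw [show l-1+1 = l by omega, show j-1+1 = j by omega] at h
      exact_mod_cast congrArg (Nat.cast : ℕ → ℝ) h
    have e2 : (l:ℝ) * ((l-1).choose j : ℝ) = (l.choose (j+1) : ℝ) * ((j:ℝ)+1) := by
      have h := Nat.add_one_mul_choose_eq (l-1) j
      rw [show l-1+1 = l by omega] at h
      exact_mod_cast congrArg (Nat.cast : ℕ → ℝ) h
    have e3 : (l:ℝ) * ((l-1).choose (j-2) : ℝ) = ((j:ℝ)-1) * (l.choose (j-1) : ℝ) := by
      have h := Nat.add_one_mul_choose_eq (l-1) (j-2)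
      rw [show l-1+1 = l by omega, show j-2+1 = j-1 by omega] at h
      have := congrArg (Nat.cast : ℕ → ℝ) h
      push_cast at this
      rw [this]
      have : ((j:ℝ)-1) = ((j-1 : ℕ) : ℝ) := by
        push_cast [Nat.cast_sub hj1]
        ring
      rw [this]
      push_cast
      ring
    have e4 : ((j:ℝ)+1) * (l.choose (j+1) : ℝ) = ((l:ℝ)-(j:ℝ)) * (l.choose j : ℝ) := by
      have h := Nat.choose_succ_right_eq l j
      have := congrArg (Nat.cast : ℕ → ℝ) h
      push_cast [Nat.cast_sub hjl] at this
      linarith [this]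
    have e5 : (j:ℝ) * (l.choose j : ℝ) = ((l:ℝ)-(j:ℝ)+1) * (l.choose (j-1) : ℝ) := by
      have h := Nat.choose_succ_right_eq l (j-1)
      rw [show j-1+1 = j by omega] at h
      have := congrArg (Nat.cast : ℕ → ℝ) h
      push_cast [Nat.cast_sub (show j-1 ≤ l by omega)] at this
      have hc : ((j-1 : ℕ) : ℝ) = (j:ℝ) - 1 := by
        push_cast [Nat.cast_sub hj1]
        ring
      rw [hc] at this
      linarith [this]
    -- target: C(n,q)^2 - C(n,q+1)*C(n,q-1) = (1/l) A B
    push_cast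
    rw [hn, hq, show j-1+1 = j by omega, show j-1-1 = j-2 by omega]
    rw [div_mul_eq_mul_div, div_mul_eq_mul_div, eq_div_iff hl0]
    have key : (l:ℝ)^2 * (((l-1).choose (j-1) : ℝ)^2
          - ((l-1).choose j : ℝ) * ((l-1).choose (j-2) : ℝ))
        = (l:ℝ) * ((l.choose j : ℝ) * (l.choose (j-1) : ℝ)) := by
      linear_combination ((l:ℝ) * ((l-1).choose (j-1) : ℝ) + (j:ℝ) * (l.choose j : ℝ)) * e1
        - ((l:ℝ) * ((l-1).choose (j-2) : ℝ)) * e2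
        - (((j:ℝ)+1) * (l.choose (j+1) : ℝ)) * e3
        - (((j:ℝ)-1) * (l.choose (j-1) : ℝ)) * e4
        + ((j:ℝ) * (l.choose j : ℝ)) * e5
    have key2 : (l:ℝ) * ((((l-1).choose (j-1) : ℝ) * ((l-1).choose (j-1) : ℝ)
          - ((l-1).choose j : ℝ) * ((l-1).choose (j-2) : ℝ)) * l)
        = (l:ℝ) * ((l.choose j : ℝ) * (l.choose (j-1) : ℝ)) := by
      linear_combination key
    have key3 := mul_left_cancel₀ hl0 key2
    linarith [key3]

lemma comb (κ : ℝ) (l : ℕ) (hl : 1 ≤ l) :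
    ∑ m ∈ range l, 2 * ((l-1).choose (2*m) : ℝ) * (catalan m : ℝ) * (κ*(1-κ))^(m+1)
      = 2 * ∑ j ∈ Finset.Icc 1 l,
          (1 / (l : ℝ)) * (l.choose j : ℝ) * (l.choose (j - 1) : ℝ) *
            κ ^ j * (1 - κ) ^ (l + 1 - j) := by
  -- replace narayana by the sum over m (E1)
  have step1 : ∀ j ∈ Finset.Icc 1 l,
      (1 / (l : ℝ)) * (l.choose j : ℝ) * (l.choose (j - 1) : ℝ) * κ ^ j * (1 - κ) ^ (l + 1 - j)
        = ∑ m ∈ range l, (if m + 1 ≤ j then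
            ((l-1).choose (2*m) : ℝ) * (catalan m : ℝ) * ((l-1-2*m).choose (j-1-m) : ℝ)
              * κ ^ j * (1 - κ) ^ (l + 1 - j) else 0) := by
    intro j hj
    simp only [Finset.mem_Icc] at hj
    rw [← Finset.sum_filter]
    have hfilter : (Finset.range l).filter (fun m => m + 1 ≤ j) = Finset.range j := by
      ext m
      simp only [Finset.mem_filter, Finset.mem_range]
      omega
    rw [hfilter, ← Finset.sum_mul, ← Finset.sum_mul, E1 l j hl hj.1 hj.2]
  rw [Finset.sum_congr rfl step1, Finset.sum_comm, Finset.mul_sum]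
  refine Finset.sum_congr rfl fun m hm => ?_
  simp only [Finset.mem_range] at hm
  rw [← Finset.sum_filter]
  have hfilter : (Finset.Icc 1 l).filter (fun j => m + 1 ≤ j) = Finset.Icc (m+1) l := by
    ext j
    simp only [Finset.mem_filter, Finset.mem_Icc]
    omega
  rw [hfilter]
  by_cases hC : 2*m ≤ l-1
  · have hshrink : ∑ j ∈ Finset.Icc (m+1) l,
          ((l-1).choose (2*m) : ℝ) * (catalan m : ℝ) * ((l-1-2*m).choose (j-1-m) : ℝ)
            * κ ^ j * (1 - κ) ^ (l + 1 - j)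
        = ∑ j ∈ Finset.Icc (m+1) (l-m),
          ((l-1).choose (2*m) : ℝ) * (catalan m : ℝ) * ((l-1-2*m).choose (j-1-m) : ℝ)
            * κ ^ j * (1 - κ) ^ (l + 1 - j) := by
      refine (Finset.sum_subset (Finset.Icc_subset_Icc_right (by omega)) fun j hj hj' => ?_).symm
      simp only [Finset.mem_Icc] at hj hj'
      rw [Nat.choose_eq_zero_of_lt (show l-1-2*m < j-1-m by omega)]
      push_cast
      ring
    rw [hshrink, ← Finset.Ico_add_one_right_eq_Icc, Finset.sum_Ico_eq_sum_range]
    rw [show l - m + 1 - (m+1) = (l-1-2*m) + 1 by omega]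
    set N := l - 1 - 2*m with hN
    have hterm : ∀ i ∈ Finset.range (N+1),
        ((l-1).choose (2*m) : ℝ) * (catalan m : ℝ) * ((l-1-2*m).choose (m+1+i-1-m) : ℝ)
            * κ ^ (m+1+i) * (1 - κ) ^ (l + 1 - (m+1+i))
        = (((l-1).choose (2*m) : ℝ) * (catalan m : ℝ) * (κ*(1-κ))^(m+1))
            * (κ ^ i * (1-κ)^(N-i) * (N.choose i : ℝ)) := by
      intro i hi
      simp only [Finset.mem_range] at hi
      rw [show m+1+i-1-m = i by omega, show l+1-(m+1+i) = (m+1)+(N-i) by omega,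
        pow_add κ (m+1) i, pow_add (1-κ) (m+1) (N-i), mul_pow]
      rw [← hN]
      ring
    rw [Finset.sum_congr rfl hterm, ← Finset.mul_sum]
    have hbin : ∑ i ∈ Finset.range (N+1), κ ^ i * (1-κ)^(N-i) * (N.choose i : ℝ) = 1 := by
      rw [← add_pow κ (1-κ) N]
      norm_num
    rw [hbin, mul_one]
    ring
  · rw [Nat.choose_eq_zero_of_lt (show l-1 < 2*m by omega)]
    push_cast
    simp


/-- The `l`-th moment of `μ_{ch,2}` equals `2·∑_{j=1}^{l} N(l,j)·κ^j·(1-κ)^{l+1-j}`,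
where `N(l,j) = (1/l)·C(l,j)·C(l,j-1)` is the Narayana number. -/

theorem moment_muCh2 (κ : ℝ) (h0 : 0 < κ) (h1 : κ < 1) (l : ℕ) (hl : 1 ≤ l) :
    ∫ x, x ^ l ∂(muCh2 κ)
      = 2 * ∑ j ∈ Finset.Icc 1 l,
          (1 / (l : ℝ)) * (l.choose j : ℝ) * (l.choose (j - 1) : ℝ) *
            κ ^ j * (1 - κ) ^ (l + 1 - j) := by
  rw [step1 κ h0 h1 l hl]
  set r : ℝ := 2 * Real.sqrt (κ * (1 - κ)) with hrdef
  have hs : 0 < κ * (1 - κ) := mul_pos h0 (by linarith)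
  have hr0 : 0 ≤ r := by positivity
  have hpull : ∀ x : ℝ, x ^ (l-1) * ((1/π) * Real.sqrt ((x - (1-r)) * ((1+r) - x)))
      = (1/π) * (x ^ (l-1) * Real.sqrt ((x - (1-r)) * ((1+r) - x))) := fun x => by ring
  simp_rw [hpull]
  rw [intervalIntegral.integral_const_mul, subst_lemma r hr0 (l-1), trig_moment r (l-1),
    show l - 1 + 1 = l by omega]
  rw [← comb κ l hl, Finset.mul_sum]
  refine Finset.sum_congr rfl fun m hm => ?_
  have hr2 : r^2 = 4*(κ*(1-κ)) := by
    rw [hrdef, mul_pow, Real.sq_sqrt hs.le]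
    ring
  have hr2m : r^(2*m) = 4^m * (κ*(1-κ))^m := by
    rw [pow_mul, hr2, mul_pow]
  rw [hr2m, hr2]
  have hpi := Real.pi_ne_zero
  have h4m : (4:ℝ)^m ≠ 0 := by positivity
  field_simp
  ring
end

section
/- For 0 < κ < 1 and l ≥ 1: (2κ(1−κ)/π)·∫_{−π}^{π} sin²θ · (2√(κ(1−κ)) cos θ + 1)^{l−1} dθ = 2·∑_{j=0}^{l−1} [ C(l−1,j)² − C(l−1,j−1)C(l−1,j+1) ] κ^{j+1}(1−κ)^{l−j}. -/
open Real

open Finset in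
private noncomputable def Bco (n : ℕ) (c s : ℝ) (j : ℕ) : ℝ :=
  (n.choose j : ℝ) * c^(n-j) * s^j

open Finset in
private noncomputable def bco (n : ℕ) (c s : ℝ) (k : ℕ) : ℝ :=
  (if 2 ≤ k then (n.choose (k-2) : ℝ) * c^(n+2-k) * s^(k-2) else 0)
    - (n.choose k : ℝ) * c^(n-k) * s^k

section Aux
open Finset

private lemma bco_zero (n : ℕ) (c s : ℝ) : bco n c s 0 = -(Bco n c s 0) := by simp [bco, Bco]

private lemma bco_one (n : ℕ) (c s : ℝ) : bco n c s 1 = -(Bco n c s 1) := by simp [bco, Bco]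

private lemma bco_add_two (n : ℕ) (c s : ℝ) (k : ℕ) :
    bco n c s (k+2) = Bco n c s k - Bco n c s (k+2) := by
  have h1 : (2:ℕ) ≤ k + 2 := by omega
  have h2 : k + 2 - 2 = k := by omega
  have h3 : n + 2 - (k+2) = n - k := by omega
  simp only [bco, Bco, if_pos h1, h2, h3]

private lemma Bco_eq_zero (n : ℕ) (c s : ℝ) (j : ℕ) (h : n < j) : Bco n c s j = 0 := by
  simp [Bco, Nat.choose_eq_zero_of_lt h]

private lemma bco_sq_sum (n : ℕ) (c s : ℝ) :
    ∑ k ∈ range (n+3), (bco n c s k)^2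
      = 2 * ∑ k ∈ range (n+1), (Bco n c s k)^2
        - 2 * ∑ k ∈ range (n+1), Bco n c s k * Bco n c s (k+2) := by
  rw [Finset.sum_range_succ' _ (n+2), Finset.sum_range_succ' _ (n+1)]
  simp only [zero_add, bco_zero, bco_one, bco_add_two, neg_sq]
  have expand : ∀ k, (Bco n c s k - Bco n c s (k+2))^2
      = (Bco n c s k)^2 + (Bco n c s (k+2))^2 - 2 * (Bco n c s k * Bco n c s (k+2)) := by
    intro k; ring
  rw [Finset.sum_congr rfl fun k _ => expand k]
  rw [Finset.sum_sub_distrib, Finset.sum_add_distrib]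
  have h2 : ∑ k ∈ range (n+1), (Bco n c s (k+2))^2
      = ∑ k ∈ range (n+3), (Bco n c s k)^2 - (Bco n c s 0)^2 - (Bco n c s 1)^2 := by
    rw [Finset.sum_range_succ' _ (n+2), Finset.sum_range_succ' _ (n+1)]
    simp only [zero_add]
    ring
  have h3 : ∑ k ∈ range (n+3), (Bco n c s k)^2 = ∑ k ∈ range (n+1), (Bco n c s k)^2 := by
    rw [show n + 3 = (n+1) + 1 + 1 by omega, Finset.sum_range_succ, Finset.sum_range_succ,
      Bco_eq_zero n c s (n+1) (by omega), Bco_eq_zero n c s (n+1+1) (by omega)]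
    ring
  have h4 : ∑ k ∈ range (n+1), 2 * (Bco n c s k * Bco n c s (k+2))
      = 2 * ∑ k ∈ range (n+1), Bco n c s k * Bco n c s (k+2) := by
    rw [Finset.mul_sum]
  rw [h4, h2, h3]
  ring

private lemma sum_peel_two (m : ℕ) (t : ℕ → ℝ) (h0 : t 0 = 0) (hm : t (m+1) = 0) :
    ∑ j ∈ range (m+2), t j = ∑ j ∈ range m, t (j+1) := by
  rw [Finset.sum_range_succ' t (m+1), h0, add_zero, Finset.sum_range_succ, hm, add_zero]

private lemma sum_drop_two (m : ℕ) (g : ℕ → ℝ) (h0 : g m = 0) (hm : g (m+1) = 0) :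
    ∑ k ∈ range (m+2), g k = ∑ k ∈ range m, g k := by
  rw [show m + 2 = m + 1 + 1 from rfl, Finset.sum_range_succ, Finset.sum_range_succ, h0, hm,
    add_zero, add_zero]

private lemma sq_sum_eq (n : ℕ) (κ c s : ℝ) (hc : c^2 = κ) (hs : s^2 = 1 - κ) :
    κ*(1-κ) * ∑ k ∈ range (n+1), (Bco n c s k)^2
      = ∑ j ∈ range (n+1), ((n.choose j : ℝ))^2 * κ^(j+1) * (1-κ)^(n+1-j) := by
  rw [Finset.mul_sum, ← Finset.sum_range_reflect (fun k => κ*(1-κ)*(Bco n c s k)^2) (n+1)]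
  refine Finset.sum_congr rfl fun j hj => ?_
  rw [Finset.mem_range] at hj
  obtain ⟨i, rfl⟩ : ∃ i, n = j + i := ⟨n - j, by omega⟩
  simp only [show j + i + 1 - 1 - j = i by omega]
  have hcs : ((j+i).choose i) = ((j+i).choose j) := by
    have := Nat.choose_symm (show j ≤ j + i by omega)
    rwa [show j + i - j = i by omega] at this
  have h1 : Bco (j+i) c s i = (((j+i).choose j):ℝ) * c^j * s^i := by
    rw [Bco, show j + i - i = j by omega, hcs]
  rw [h1, show j + i + 1 - j = i + 1 by omega, ← hs, ← hc]
  ring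

private lemma cross_sum_eq (n : ℕ) (κ c s : ℝ) (hc : c^2 = κ) (hs : s^2 = 1 - κ) :
    κ*(1-κ) * ∑ k ∈ range (n+1), Bco n c s k * Bco n c s (k+2)
      = ∑ j ∈ range (n+1),
          (if j = 0 then 0 else ((n.choose (j-1)):ℝ)) * ((n.choose (j+1)):ℝ)
            * κ^(j+1) * (1-κ)^(n+1-j) := by
  rcases n with _ | m
  · simp [Bco]
  · rw [show m + 1 + 1 = m + 2 from rfl]
    conv_rhs => rw [sum_peel_two m _ (by simp)
      (by rw [Nat.choose_eq_zero_of_lt (show m+1 < m+1+1 by omega)]; norm_num)]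
    conv_lhs => rw [sum_drop_two m _
      (by rw [Bco_eq_zero (m+1) c s (m+2) (by omega)]; ring)
      (by rw [Bco_eq_zero (m+1) c s (m+1+2) (by omega)]; ring)]
    rw [Finset.mul_sum, ← Finset.sum_range_reflect
      (fun k => κ*(1-κ)*(Bco (m+1) c s k * Bco (m+1) c s (k+2))) m]
    refine Finset.sum_congr rfl fun j hj => ?_
    rw [Finset.mem_range] at hj
    obtain ⟨i, rfl⟩ : ∃ i, m = j + i + 1 := ⟨m - j - 1, by omega⟩
    simp only [show j + i + 1 - 1 - j = i by omega]
    have hcs1 : ((j+i+2).choose i) = ((j+i+2).choose (j+2)) := by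
      have := Nat.choose_symm (show j+2 ≤ j + i + 2 by omega)
      rwa [show j + i + 2 - (j+2) = i by omega] at this
    have hcs2 : ((j+i+2).choose (i+2)) = ((j+i+2).choose j) := by
      have := Nat.choose_symm (show j ≤ j + i + 2 by omega)
      rwa [show j + i + 2 - j = i + 2 by omega] at this
    have h1 : Bco (j+i+1+1) c s i = (((j+i+2).choose (j+2)):ℝ) * c^(j+2) * s^i := by
      rw [Bco, show j+i+1+1 - i = j + 2 by omega, show j+i+1+1 = j+i+2 from rfl, hcs1]
    have h2 : Bco (j+i+1+1) c s (i+2) = (((j+i+2).choose j):ℝ) * c^j * s^(i+2) := by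
      rw [Bco, show j+i+1+1 - (i+2) = j by omega, show j+i+1+1 = j+i+2 from rfl, hcs2]
    rw [h1, h2, if_neg (by omega : ¬ (j + 1 = 0)),
      show j + 1 - 1 = j from rfl, show j+i+1+1+1-(j+1) = i + 2 by omega,
      show j+i+1+1 = j+i+2 from rfl, ← hs, ← hc]
    ring

private lemma exp_orth (m : ℤ) :
    (∫ θ in (-Real.pi)..Real.pi, Complex.exp (m * Complex.I * θ)) =
      if m = 0 then (2 * Real.pi : ℂ) else 0 := by
  rcases eq_or_ne m 0 with rfl | hm
  · simp; ring
  · rw [if_neg hm]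
    have hc : (m : ℂ) * Complex.I ≠ 0 := by
      simp [Complex.I_ne_zero, hm]
    rw [integral_exp_mul_complex hc]
    have key : Complex.exp ((m:ℂ) * Complex.I * (-Real.pi : ℝ))
        = Complex.exp ((m:ℂ) * Complex.I * (Real.pi : ℝ)) := by
      have : ((m:ℂ) * Complex.I * ((-Real.pi : ℝ) : ℂ))
          = (m:ℂ) * Complex.I * (Real.pi : ℝ) + (-m : ℤ) * (2 * Real.pi * Complex.I) := by
        push_cast
        ring
      rw [this, Complex.exp_add, Complex.exp_int_mul_two_pi_mul_I, mul_one]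
    rw [key, sub_self, zero_div]

private lemma bco_sum_factor (n : ℕ) (c s : ℝ) (e : ℂ) :
    (∑ k ∈ range (n+3), (bco n c s k : ℂ) * e^k)
      = (e^2 - 1) * ((s:ℂ) * e + (c:ℂ))^n := by
  have hsplit : (∑ k ∈ range (n+3), (bco n c s k : ℂ) * e^k)
      = (∑ k ∈ range (n+3), ((if 2 ≤ k then (n.choose (k-2) : ℝ) * c^(n+2-k) * s^(k-2) else 0 : ℝ) : ℂ) * e^k)
        - (∑ k ∈ range (n+3), ((n.choose k : ℝ) * c^(n-k) * s^k : ℂ) * e^k) := by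
    rw [← Finset.sum_sub_distrib]
    refine Finset.sum_congr rfl fun k _ => by
      simp only [bco]; push_cast; ring
  rw [hsplit]
  have h1 : (∑ k ∈ range (n+3), ((if 2 ≤ k then (n.choose (k-2) : ℝ) * c^(n+2-k) * s^(k-2) else 0 : ℝ) : ℂ) * e^k)
      = e^2 * ((s:ℂ) * e + (c:ℂ))^n := by
    rw [Finset.sum_range_succ' _ (n+2), Finset.sum_range_succ' _ (n+1)]
    simp only [show ¬ (2 ≤ 0) by omega, show ¬ (2 ≤ 1) by omega, if_neg, if_false]
    norm_num
    rw [add_pow, Finset.mul_sum]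
    refine Finset.sum_congr rfl fun k hk => ?_
    have h3 : k + 1 + 1 - 2 = k := by omega
    have h4 : n + 2 - (k+1+1) = n - k := by omega
    rw [h3, h4]
    ring
  have h2 : (∑ k ∈ range (n+3), ((n.choose k : ℝ) * c^(n-k) * s^k : ℂ) * e^k)
      = ((s:ℂ) * e + (c:ℂ))^n := by
    rw [show n + 3 = (n+1) + 1 + 1 by omega, Finset.sum_range_succ, Finset.sum_range_succ]
    rw [Nat.choose_eq_zero_of_lt (by omega), Nat.choose_eq_zero_of_lt (by omega)]
    norm_num
    rw [add_pow]
    refine Finset.sum_congr rfl fun k hk => by ring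
  rw [h1, h2]; ring

private lemma pointwise_eq (n : ℕ) (c s : ℝ) (h1 : (c:ℂ)^2 + (s:ℂ)^2 = 1) (θ : ℝ) :
    ((Real.sin θ^2 * (2*(c*s)*Real.cos θ + 1)^n : ℝ) : ℂ)
      = ∑ k ∈ range (n+3), ∑ l ∈ range (n+3),
          ((bco n c s k * bco n c s l / 4 : ℝ):ℂ)
            * Complex.exp ((((k:ℤ) - (l:ℤ)):ℂ) * Complex.I * θ) := by
  set u := Complex.exp ((θ:ℂ) * Complex.I) with hu
  set v := Complex.exp (-(θ:ℂ) * Complex.I) with hv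
  have huv : u * v = 1 := by rw [hu, hv, ← Complex.exp_add]; simp
  have hexp : ∀ k l : ℕ, Complex.exp ((((k:ℤ) - (l:ℤ)):ℂ) * Complex.I * θ) = u^k * v^l := by
    intro k l
    rw [hu, hv, ← Complex.exp_nat_mul, ← Complex.exp_nat_mul, ← Complex.exp_add]
    congr 1
    push_cast
    ring
  have hrhs : ∑ k ∈ range (n+3), ∑ l ∈ range (n+3),
        ((bco n c s k * bco n c s l / 4 : ℝ):ℂ)
          * Complex.exp ((((k:ℤ) - (l:ℤ)):ℂ) * Complex.I * θ)
      = (∑ k ∈ range (n+3), (bco n c s k : ℂ) * u^k)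
        * (∑ l ∈ range (n+3), (bco n c s l : ℂ) * v^l) / 4 := by
    rw [Finset.sum_mul_sum, Finset.sum_div]
    refine Finset.sum_congr rfl fun k _ => ?_
    rw [Finset.sum_div]
    refine Finset.sum_congr rfl fun l _ => ?_
    rw [hexp k l]
    push_cast
    ring
  rw [hrhs, bco_sum_factor, bco_sum_factor]
  have hsin : Complex.sin (θ:ℂ) = (v - u) * Complex.I / 2 := rfl
  have hcos : Complex.cos (θ:ℂ) = (u + v) / 2 := rfl
  push_cast
  rw [hsin, hcos]
  have hprod : ((s:ℂ)*u + c) * ((s:ℂ)*v + c) = 2*((c:ℂ)*s)*((u+v)/2) + 1 := by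
    linear_combination (s:ℂ)^2 * huv + h1
  have hsq : ((v - u) * Complex.I / 2)^2 = (u^2-1)*(v^2-1)/4 := by
    linear_combination ((v-u)^2/4) * Complex.I_sq + ((1 - u*v)/4) * huv
  calc ((v - u) * Complex.I / 2)^2 * (2*((c:ℂ)*s)*((u+v)/2) + 1)^n
      = ((v - u) * Complex.I / 2)^2 * (((s:ℂ)*u + c) * ((s:ℂ)*v + c))^n := by rw [hprod]
    _ = ((v - u) * Complex.I / 2)^2 * (((s:ℂ)*u + c)^n * ((s:ℂ)*v + c)^n) := by rw [mul_pow]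
    _ = (u^2-1)*(v^2-1)/4 * (((s:ℂ)*u + c)^n * ((s:ℂ)*v + c)^n) := by rw [hsq]
    _ = (u ^ 2 - 1) * ((s:ℂ) * u + ↑c) ^ n * ((v ^ 2 - 1) * ((s:ℂ) * v + ↑c) ^ n) / 4 := by ring

private lemma integral_eq (n : ℕ) (c s : ℝ) (h1 : (c:ℂ)^2 + (s:ℂ)^2 = 1) :
    (∫ θ in (-Real.pi)..Real.pi, Real.sin θ^2 * (2*(c*s)*Real.cos θ + 1)^n)
      = Real.pi/2 * ∑ k ∈ range (n+3), (bco n c s k)^2 := by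
  apply Complex.ofReal_injective
  rw [← intervalIntegral.integral_ofReal]
  simp only [pointwise_eq n c s h1]
  have hcont : ∀ (k l : ℕ), Continuous (fun θ : ℝ =>
      ((bco n c s k * bco n c s l / 4 : ℝ):ℂ)
        * Complex.exp ((((k:ℤ) - (l:ℤ)):ℂ) * Complex.I * θ)) := by
    intro k l
    exact continuous_const.mul (Complex.continuous_exp.comp (continuous_const.mul
      Complex.continuous_ofReal))
  rw [intervalIntegral.integral_finset_sum]
  swap
  · intro k _
    exact (continuous_finset_sum _ fun l _ => hcont k l).intervalIntegrable _ _
  have hinner : ∀ k ∈ range (n+3),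
      (∫ θ in (-Real.pi)..Real.pi, ∑ l ∈ range (n+3),
          ((bco n c s k * bco n c s l / 4 : ℝ):ℂ)
            * Complex.exp ((((k:ℤ) - (l:ℤ)):ℂ) * Complex.I * θ))
        = ((bco n c s k)^2/4 : ℝ) * (2 * Real.pi : ℂ) := by
    intro k hk
    rw [intervalIntegral.integral_finset_sum (fun l _ => (hcont k l).intervalIntegrable _ _)]
    have hterm : ∀ l ∈ range (n+3),
        (∫ θ in (-Real.pi)..Real.pi,
            ((bco n c s k * bco n c s l / 4 : ℝ):ℂ)
              * Complex.exp ((((k:ℤ) - (l:ℤ)):ℂ) * Complex.I * θ))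
          = if l = k then ((bco n c s k * bco n c s k / 4 : ℝ):ℂ) * (2 * Real.pi : ℂ) else 0 := by
      intro l _
      rw [intervalIntegral.integral_const_mul]
      rw [show ((k:ℤ):ℂ) - ((l:ℤ):ℂ) = ((((k:ℤ) - (l:ℤ)) : ℤ):ℂ) from by push_cast; ring]
      rw [exp_orth ((k:ℤ) - (l:ℤ))]
      rcases eq_or_ne l k with rfl | hlk
      · rw [if_pos rfl, if_pos (by omega)]
      · rw [if_neg hlk, if_neg (by omega), mul_zero]
    rw [Finset.sum_congr rfl hterm, Finset.sum_ite_eq' (range (n+3)) k, if_pos hk]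
    push_cast
    ring
  rw [Finset.sum_congr rfl hinner]
  push_cast
  rw [Finset.mul_sum]
  exact Finset.sum_congr rfl fun k _ => by ring

end Aux

/-- The trigonometric integral identity
`(2κ(1-κ)/π)·∫_{-π}^{π} sin²θ (2√(κ(1-κ)) cos θ + 1)^{l-1} dθ
  = 2·∑_{j=0}^{l-1} [C(l-1,j)² - C(l-1,j-1)C(l-1,j+1)] κ^{j+1}(1-κ)^{l-j}`. -/
theorem trig_integral_eq_binomial_sum (κ : ℝ) (h0 : 0 < κ) (h1 : κ < 1) (l : ℕ)
    (hl : 1 ≤ l) :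
    (2 * κ * (1 - κ) / Real.pi) *
        ∫ θ in (-Real.pi)..Real.pi,
          Real.sin θ ^ 2 * (2 * Real.sqrt (κ * (1 - κ)) * Real.cos θ + 1) ^ (l - 1)
      = 2 * ∑ j ∈ Finset.range l,
          (((l - 1).choose j : ℝ) ^ 2 -
              (if j = 0 then 0 else ((l - 1).choose (j - 1) : ℝ)) *
                ((l - 1).choose (j + 1) : ℝ))
            * κ ^ (j + 1) * (1 - κ) ^ (l - j) := by
  obtain ⟨n, rfl⟩ : ∃ n, l = n + 1 := ⟨l - 1, by omega⟩
  simp only [Nat.add_sub_cancel]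
  set c := Real.sqrt κ with hcdef
  set s := Real.sqrt (1 - κ) with hsdef
  have hc : c^2 = κ := Real.sq_sqrt h0.le
  have hs : s^2 = 1 - κ := Real.sq_sqrt (by linarith)
  have hsqrt : Real.sqrt (κ * (1 - κ)) = c * s := Real.sqrt_mul h0.le _
  have hC : (c:ℂ)^2 + (s:ℂ)^2 = 1 := by
    rw [← Complex.ofReal_pow, ← Complex.ofReal_pow, hc, hs]
    push_cast
    ring
  rw [hsqrt, integral_eq n c s hC, bco_sq_sum]
  have h1 := sq_sum_eq n κ c s hc hs
  have h2 := cross_sum_eq n κ c s hc hs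
  have hsplit : ∑ j ∈ Finset.range (n+1),
        ((n.choose j : ℝ) ^ 2 -
            (if j = 0 then 0 else (n.choose (j - 1) : ℝ)) * (n.choose (j + 1) : ℝ))
          * κ ^ (j + 1) * (1 - κ) ^ (n + 1 - j)
      = (∑ j ∈ Finset.range (n+1), ((n.choose j : ℝ))^2 * κ^(j+1) * (1-κ)^(n+1-j))
        - ∑ j ∈ Finset.range (n+1),
            (if j = 0 then 0 else ((n.choose (j-1)):ℝ)) * ((n.choose (j+1)):ℝ)
              * κ^(j+1) * (1-κ)^(n+1-j) := by
    rw [← Finset.sum_sub_distrib]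
    exact Finset.sum_congr rfl fun j _ => by ring
  rw [hsplit, ← h1, ← h2]
  have hπ : Real.pi ≠ 0 := Real.pi_ne_zero
  field_simp
end
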